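/- Let L be the backward generator of an irreducible Markov jump process on a finite connected graph with N vertices, stationary distribution ρ, and let f satisfy ∑_y ρ(y)f(y) = 0. Then the pseudo-potential V = L_D^{-1} f is given by V(x) = -∑_y (w(F_{N-2}^{x→y}) / w(F_{N-1})) f(y), where F_{N-2}^{x→y} is the set of rooted spanning forests with N-2 edges in which y is the root of its tree and x, y lie in the same tree, F_{N-1} is the set of rooted spanning trees, and w denotes the sum of products of the rates over the forests' directed edges. -/

import Mathlib

open Matrix

/-- The one-step relation of a finite set of directed edges. -/
def forestStep {V : Type*} (F : Finset (V × V)) (a b : V) : Prop := (a, b) ∈ F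

/-- `F` is a rooted spanning forest of the graph `G`: all its directed edges
are edges of `G`, every vertex has at most one outgoing edge, and there are no
directed cycles. -/
def IsRootedForest {V : Type*} [DecidableEq V] (G : SimpleGraph V)
    (F : Finset (V × V)) : Prop :=
  (∀ e ∈ F, G.Adj e.1 e.2) ∧
  (∀ x : V, (F.filter (fun e => e.1 = x)).card ≤ 1) ∧
  (∀ x y : V, (x, y) ∈ F → ¬ Relation.ReflTransGen (forestStep F) y x)

/-- `x` and `y` lie in the same tree of `F` and `y` is the root of that tree. -/
def RootedAt {V : Type*} (F : Finset (V × V)) (x y : V) : Prop :=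
  Relation.ReflTransGen (forestStep F) x y ∧ ∀ z, (y, z) ∉ F

/-- The weight of a forest: product of the rates on its directed edges. -/
def forestWeight {V : Type*} (k : V → V → ℝ) (F : Finset (V × V)) : ℝ :=
  ∏ e ∈ F, k e.1 e.2

/-- The total weight of the collection of forests satisfying `P`. -/
noncomputable def weightSum {V : Type*} [Fintype V] [DecidableEq V]
    (k : V → V → ℝ) (P : Finset (V × V) → Prop) : ℝ :=
  ∑ F : Finset (V × V), Set.indicator {F | P F} (forestWeight k) F

open Finset
set_option linter.unusedSectionVars false

namespace PF

variable {V : Type*} [DecidableEq V]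

/-- Reachability along forest edges. -/
abbrev Rel (F : Finset (V × V)) : V → V → Prop := Relation.ReflTransGen (forestStep F)

/-- Every vertex has at most one outgoing edge. -/
def IsFun (F : Finset (V × V)) : Prop := ∀ ⦃a b c : V⦄, (a, b) ∈ F → (a, c) ∈ F → b = c

def Root (F : Finset (V × V)) (v : V) : Prop := ∀ w, (v, w) ∉ F

def Acyc (F : Finset (V × V)) : Prop := ∀ ⦃a b : V⦄, (a, b) ∈ F → ¬ Rel F b a

def NoLoop (F : Finset (V × V)) : Prop := ∀ a, (a, a) ∉ F

open scoped Classical in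
noncomputable def fn (F : Finset (V × V)) (v : V) : V :=
  if h : ∃ w, (v, w) ∈ F then h.choose else v

lemma isFun_of_card {F : Finset (V × V)}
    (h : ∀ x : V, (F.filter (fun e => e.1 = x)).card ≤ 1) : IsFun F := by
  intro a b c hb hc
  have hb' : (a, b) ∈ F.filter (fun e => e.1 = a) := by simp [hb]
  have hc' : (a, c) ∈ F.filter (fun e => e.1 = a) := by simp [hc]
  have := Finset.card_le_one.1 (h a) _ hb' _ hc'
  exact congrArg Prod.snd this

lemma card_filter_of_isFun {F : Finset (V × V)} (h : IsFun F) (x : V) :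
    (F.filter (fun e => e.1 = x)).card ≤ 1 := by
  refine Finset.card_le_one.2 ?_
  rintro ⟨a, b⟩ hab ⟨c, d⟩ hcd
  simp only [Finset.mem_filter] at hab hcd
  obtain ⟨h1, rfl⟩ := hab
  obtain ⟨h2, h3⟩ := hcd
  subst h3
  exact congrArg _ (h h2 h1).symm

lemma fn_eq {F : Finset (V × V)} (h : IsFun F) {a b : V} (hab : (a, b) ∈ F) : fn F a = b := by
  have h1 : ∃ w, (a, w) ∈ F := ⟨b, hab⟩
  rw [fn, dif_pos h1]
  exact h h1.choose_spec hab

lemma fn_root {F : Finset (V × V)} {v : V} (h : Root F v) : fn F v = v := by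
  rw [fn, dif_neg]; rintro ⟨w, hw⟩; exact h w hw

lemma fn_mem_or_root (F : Finset (V × V)) (v : V) :
    (v, fn F v) ∈ F ∨ (Root F v ∧ fn F v = v) := by
  by_cases h : ∃ w, (v, w) ∈ F
  · left; rw [fn, dif_pos h]; exact h.choose_spec
  · right
    push_neg at h
    exact ⟨h, by rw [fn, dif_neg (by push_neg; exact h)]⟩

lemma rel_fn (F : Finset (V × V)) (v : V) : Rel F v (fn F v) := by
  rcases fn_mem_or_root F v with h | h
  · exact Relation.ReflTransGen.single h
  · rw [h.2]

lemma rel_iterate (F : Finset (V × V)) (v : V) (n : ℕ) : Rel F v ((fn F)^[n] v) := by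
  induction n with
  | zero => exact Relation.ReflTransGen.refl
  | succ n ih =>
      rw [Function.iterate_succ_apply']
      exact ih.trans (rel_fn F _)

lemma rel_iff_iterate {F : Finset (V × V)} (h : IsFun F) {a b : V} :
    Rel F a b ↔ ∃ n, (fn F)^[n] a = b := by
  constructor
  · intro hr
    induction hr with
    | refl => exact ⟨0, rfl⟩
    | tail _ hbc ih =>
        obtain ⟨n, rfl⟩ := ih
        exact ⟨n + 1, by rw [Function.iterate_succ_apply', fn_eq h hbc]⟩
  · rintro ⟨n, rfl⟩
    exact rel_iterate F a n

omit [DecidableEq V] in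
lemma root_rel {F : Finset (V × V)} {r b : V} (h : Root F r) (hr : Rel F r b) : b = r := by
  induction hr with
  | refl => rfl
  | tail _ hbc ih => exact absurd hbc (ih ▸ h _)

/-- In an acyclic functional graph with no loops, every vertex reaches a root. -/
lemma exists_root [Fintype V] {F : Finset (V × V)} (hf : IsFun F) (ha : Acyc F)
    (hn : NoLoop F) (a : V) : ∃ r, Rel F a r ∧ Root F r := by
  have key : ∀ s t : ℕ, s < t → (fn F)^[s] a = (fn F)^[t] a → ∃ r, Rel F a r ∧ Root F r := by
    intro s t hst heq
    set p := (fn F)^[s] a with hp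
    have hper : (fn F)^[t - s] p = p := by
      have h1 : (fn F)^[t] a = (fn F)^[t - s] ((fn F)^[s] a) := by
        rw [← Function.iterate_add_apply]
        congr 1
        omega
      rw [hp, ← h1, ← heq]
    have hroot : Root F p := by
      rcases fn_mem_or_root F p with hm | hr
      · exfalso
        refine ha hm ?_
        have h1 : (fn F)^[t - s - 1] (fn F p) = p := by
          have h3 : (fn F)^[t - s] p = (fn F)^[t - s - 1] (fn F p) := by
            conv_lhs => rw [show t - s = (t - s - 1) + 1 by omega]
            exact Function.iterate_succ_apply _ _ _
          rw [← h3]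
          exact hper
        have := rel_iterate F (fn F p) (t - s - 1)
        rwa [h1] at this
      · exact hr.1
    exact ⟨p, rel_iterate F a _, hroot⟩
  have : ¬ Function.Injective (fun n : Fin (Fintype.card V + 1) => (fn F)^[n] a) := by
    intro hinj
    have := Fintype.card_le_of_injective _ hinj
    simp at this
  rw [Function.not_injective_iff] at this
  obtain ⟨i, j, hij, hne⟩ := this
  rcases (show (i : ℕ) ≠ (j : ℕ) from fun h => hne (Fin.ext h)).lt_or_gt with h | h
  · exact key _ _ h hij
  · exact key _ _ h hij.symm

lemma root_unique {F : Finset (V × V)} (hf : IsFun F) {a r r' : V}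
    (h1 : Rel F a r) (h2 : Rel F a r') (hr : Root F r) (hr' : Root F r') : r = r' := by
  obtain ⟨n, rfl⟩ := (rel_iff_iterate hf).1 h1
  obtain ⟨m, rfl⟩ := (rel_iff_iterate hf).1 h2
  rcases le_total n m with h | h
  · obtain ⟨d, rfl⟩ := Nat.exists_eq_add_of_le h
    have h1 : (fn F)^[n + d] a = (fn F)^[d] ((fn F)^[n] a) := by
      rw [add_comm]
      exact Function.iterate_add_apply _ d n a
    rw [h1]
    exact (Function.iterate_fixed (fn_root hr) d).symm
  · obtain ⟨d, rfl⟩ := Nat.exists_eq_add_of_le h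
    have h1 : (fn F)^[m + d] a = (fn F)^[d] ((fn F)^[m] a) := by
      rw [add_comm]
      exact Function.iterate_add_apply _ d m a
    rw [h1]
    exact Function.iterate_fixed (fn_root hr') d

lemma rel_total {F : Finset (V × V)} (hf : IsFun F) {a b c : V}
    (h1 : Rel F a b) (h2 : Rel F a c) : Rel F b c ∨ Rel F c b := by
  obtain ⟨n, rfl⟩ := (rel_iff_iterate hf).1 h1
  obtain ⟨m, rfl⟩ := (rel_iff_iterate hf).1 h2
  rcases le_total n m with h | h
  · left
    obtain ⟨d, rfl⟩ := Nat.exists_eq_add_of_le h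
    have h1 : (fn F)^[n + d] a = (fn F)^[d] ((fn F)^[n] a) := by
      rw [add_comm]
      exact Function.iterate_add_apply _ d n a
    rw [h1]
    exact rel_iterate F _ d
  · right
    obtain ⟨d, rfl⟩ := Nat.exists_eq_add_of_le h
    have h1 : (fn F)^[m + d] a = (fn F)^[d] ((fn F)^[m] a) := by
      rw [add_comm]
      exact Function.iterate_add_apply _ d m a
    rw [h1]
    exact rel_iterate F _ d

/-- If `a` lies on a cycle, then everything it reaches reaches it back. -/
lemma rel_back {F : Finset (V × V)} (hf : IsFun F) {a b y : V}
    (hab : (a, b) ∈ F) (hba : Rel F b a) (hay : Rel F a y) : Rel F y a := by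
  obtain ⟨m, hm⟩ := (rel_iff_iterate hf).1 hba
  obtain ⟨n, rfl⟩ := (rel_iff_iterate hf).1 hay
  have hper : (fn F)^[m + 1] a = a := by
    rw [Function.iterate_add_apply, Function.iterate_one, fn_eq hf hab, hm]
  have hper' : ∀ q : ℕ, (fn F)^[(m + 1) * q] a = a := by
    intro q
    rw [Function.iterate_mul]
    exact Function.iterate_fixed hper q
  refine (rel_iff_iterate hf).2 ⟨(m + 1) * (n + 1) - n, ?_⟩
  rw [← Function.iterate_add_apply]
  have h2 : (m + 1) * (n + 1) - n + n = (m + 1) * (n + 1) := by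
    have : n ≤ (m + 1) * (n + 1) := by nlinarith
    omega
  rw [h2, hper']

lemma cyclic_no_root {F : Finset (V × V)} (hf : IsFun F) {a b r : V}
    (hab : (a, b) ∈ F) (hba : Rel F b a) (har : Rel F a r) (hr : Root F r) : False := by
  have := root_rel hr (rel_back hf hab hba har)
  exact hr b (this ▸ hab)

/-- Uniqueness of the edge into `y` coming from the cycle of `y`. -/
lemma pred_unique {F : Finset (V × V)} (hf : IsFun F) {z z' y : V}
    (h1 : (z, y) ∈ F) (h2 : (z', y) ∈ F) (hy1 : Rel F y z) (hy2 : Rel F y z') : z = z' := by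
  obtain ⟨a, ha⟩ := (rel_iff_iterate hf).1 hy1
  obtain ⟨b, hb⟩ := (rel_iff_iterate hf).1 hy2
  have hza : (fn F)^[a + 1] y = y := by
    rw [Function.iterate_succ_apply', ha, fn_eq hf h1]
  have hzb : (fn F)^[b + 1] y = y := by
    rw [Function.iterate_succ_apply', hb, fn_eq hf h2]
  set m := Function.minimalPeriod (fn F) y with hm
  have hma : m ∣ a + 1 := Function.IsPeriodicPt.minimalPeriod_dvd hza
  have hmb : m ∣ b + 1 := Function.IsPeriodicPt.minimalPeriod_dvd hzb
  have hmpos : 0 < m := Function.IsPeriodicPt.minimalPeriod_pos (Nat.succ_pos a) hza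
  have hmod : ∀ c : ℕ, m ∣ c + 1 → c % m = m - 1 := by
    intro c hc
    obtain ⟨q, hq⟩ := hc
    have hq1 : 1 ≤ q := by nlinarith
    have hc2 : c = (m - 1) + m * (q - 1) := by
      have : m * q = m * (q - 1) + m := by nlinarith [Nat.sub_add_cancel hq1]
      omega
    rw [hc2, Nat.add_mul_mod_self_left]
    exact Nat.mod_eq_of_lt (by omega)
  have e1 : z = (fn F)^[a % m] y := by rw [← ha, Function.iterate_mod_minimalPeriod_eq]
  rw [hmod a hma] at e1
  have e2 : z' = (fn F)^[b % m] y := by rw [← hb, Function.iterate_mod_minimalPeriod_eq]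
  rw [hmod b hmb] at e2
  rw [e1, e2]

end PF

namespace PF
open scoped Classical

variable {V : Type*} [DecidableEq V]

omit [DecidableEq V] in
lemma pair_eq {x y a b : V} (h : (x, y) = (a, b)) : x = a ∧ y = b :=
  ⟨congrArg Prod.fst h, congrArg Prod.snd h⟩

omit [DecidableEq V] in
lemma rel_mono {F F' : Finset (V × V)} (h : F ⊆ F') {a b : V} (hr : Rel F a b) : Rel F' a b :=
  by
    unfold Rel at *
    induction hr with
    | refl => exact Relation.ReflTransGen.refl
    | tail _ hbc ih => exact ih.tail (h hbc)

omit [DecidableEq V] in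
lemma acyc_subset {F F' : Finset (V × V)} (h : F ⊆ F') (ha : Acyc F') : Acyc F :=
  fun _ _ he hr => ha (h he) (rel_mono h hr)

omit [DecidableEq V] in
lemma isFun_subset {F F' : Finset (V × V)} (h : F ⊆ F') (hf : IsFun F') : IsFun F :=
  fun _ _ _ h1 h2 => hf (h h1) (h h2)

omit [DecidableEq V] in
lemma noLoop_of_adj {G : SimpleGraph V} {F : Finset (V × V)}
    (h : ∀ e ∈ F, G.Adj e.1 e.2) : NoLoop F := fun a ha => (G.loopless.irrefl a) (h _ ha)

/-- Characterisation of reachability after inserting an edge. -/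
lemma rel_insert_iff {F : Finset (V × V)} {a b u v : V} :
    Rel (insert (a, b) F) u v ↔ Rel F u v ∨ (Rel F u a ∧ Rel F b v) := by
  constructor
  · intro h
    induction h with
    | refl => exact Or.inl Relation.ReflTransGen.refl
    | @tail w v' _ hst ih =>
        rcases Finset.mem_insert.1 hst with he | he
        · obtain ⟨h1, h2⟩ := pair_eq he
          rcases ih with ih | ih
          · exact Or.inr ⟨h1 ▸ ih, h2 ▸ Relation.ReflTransGen.refl⟩
          · exact Or.inr ⟨ih.1, h2 ▸ Relation.ReflTransGen.refl⟩
        · rcases ih with ih | ih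
          · exact Or.inl (ih.tail he)
          · exact Or.inr ⟨ih.1, ih.2.tail he⟩
  · rintro (h | ⟨h1, h2⟩)
    · exact rel_mono (Finset.subset_insert _ _) h
    · exact ((rel_mono (Finset.subset_insert _ _) h1).tail
        (Finset.mem_insert_self _ _)).trans (rel_mono (Finset.subset_insert _ _) h2)

lemma isFun_insert {F : Finset (V × V)} {a b : V} (hf : IsFun F) (ha : Root F a) :
    IsFun (insert (a, b) F) := by
  intro x y z hy hz
  rcases Finset.mem_insert.1 hy with hy | hy <;> rcases Finset.mem_insert.1 hz with hz | hz
  · rw [(pair_eq hy).2, (pair_eq hz).2]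
  · exact absurd ((pair_eq hy).1 ▸ hz) (ha _)
  · exact absurd ((pair_eq hz).1 ▸ hy) (ha _)
  · exact hf hy hz

lemma acyc_insert {F : Finset (V × V)} {a b : V} (hA : Acyc F) (ha : Root F a)
    (hna : ¬ Rel F b a) : Acyc (insert (a, b) F) := by
  intro u v huv hr
  rcases Finset.mem_insert.1 huv with he | he
  · obtain ⟨h1, h2⟩ := pair_eq he
    subst h1; subst h2
    rcases rel_insert_iff.1 hr with h | h
    · exact hna h
    · exact hna h.1
  · rcases rel_insert_iff.1 hr with h | h
    · exact hA he h
    · exact hna (h.2.trans ((Relation.ReflTransGen.single (he : forestStep F u v)).trans h.1))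

omit [DecidableEq V] in
/-- One can always reach `c` without using the outgoing edge of `c`. -/
lemma rel_erase_to [DecidableEq (V × V)] {F : Finset (V × V)} {u c d : V} (h : Rel F u c) :
    Rel (F.erase (c, d)) u c := by
  induction h using Relation.ReflTransGen.head_induction_on with
  | refl => exact Relation.ReflTransGen.refl
  | @head x w h' _ ih =>
      by_cases hx : x = c
      · exact hx ▸ Relation.ReflTransGen.refl
      · exact Relation.ReflTransGen.head
          (Finset.mem_erase.2 ⟨by simp [hx], h'⟩) ih

omit [DecidableEq V] in
/-- A path that never visits `c` survives deleting an edge out of `c`. -/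
lemma rel_erase_avoid [DecidableEq (V × V)] {F : Finset (V × V)} {u v c d : V} (h : Rel F u v)
    (hc : ¬ Rel F u c) : Rel (F.erase (c, d)) u v := by
  induction h using Relation.ReflTransGen.head_induction_on with
  | refl => exact Relation.ReflTransGen.refl
  | @head x w h' hrest ih =>
      have hxc : x ≠ c := fun hx => hc (hx ▸ Relation.ReflTransGen.refl)
      have hwc : ¬ Rel F w c := fun hw => hc (Relation.ReflTransGen.head h' hw)
      exact Relation.ReflTransGen.head (Finset.mem_erase.2 ⟨by simp [hxc], h'⟩) (ih hwc)

/-- Either a path survives deleting the outgoing edge of `c`, or it visits `c`. -/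
lemma rel_erase_or {F : Finset (V × V)} {u v c : V} (hf : IsFun F) (h : Rel F u v) :
    Rel (F.erase (c, fn F c)) u v ∨ Rel F u c := by
  induction h using Relation.ReflTransGen.head_induction_on with
  | refl => exact Or.inl Relation.ReflTransGen.refl
  | @head x w h' hrest ih =>
      by_cases hx : x = c
      · exact Or.inr (hx ▸ Relation.ReflTransGen.refl)
      · rcases ih with ih | ih
        · exact Or.inl (Relation.ReflTransGen.head (Finset.mem_erase.2 ⟨by simp [hx], h'⟩) ih)
        · exact Or.inr (Relation.ReflTransGen.head h' ih)

lemma root_erase_fn {F : Finset (V × V)} (hf : IsFun F) (c : V) :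
    Root (F.erase (c, fn F c)) c := by
  intro w hw
  have hmem := Finset.mem_of_mem_erase hw
  have := fn_eq hf hmem
  exact (Finset.mem_erase.1 hw).1 (by rw [← this])

lemma root_insert_of_ne {F : Finset (V × V)} {a b r : V} (hr : Root F r) (hra : r ≠ a) :
    Root (insert (a, b) F) r := by
  intro w hw
  rcases Finset.mem_insert.1 hw with he | he
  · exact hra (pair_eq he).1
  · exact hr w he

/-- Number of roots plus number of edges equals number of vertices. -/
lemma card_roots [Fintype V] {F : Finset (V × V)} (hf : IsFun F) :
    (Finset.univ.filter (fun v : V => Root F v)).card + F.card = Fintype.card V := by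
  have h1 : F.card = ∑ v : V, (F.filter (fun e => e.1 = v)).card :=
    Finset.card_eq_sum_card_fiberwise (fun x _ => Finset.mem_univ _)
  have h2 : ∀ v : V, (F.filter (fun e => e.1 = v)).card = if Root F v then 0 else 1 := by
    intro v
    by_cases hv : Root F v
    · simp only [hv, if_true, Finset.card_eq_zero]
      ext ⟨a, b⟩
      simp only [Finset.mem_filter, Finset.notMem_empty, iff_false, not_and]
      rintro hab rfl
      exact absurd hab (hv b)
    · simp only [hv, if_false]
      have hle := card_filter_of_isFun hf v
      have hex : ∃ w, (v, w) ∈ F := by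
        by_contra hno; push_neg at hno; exact hv hno
      obtain ⟨w, hw⟩ := hex
      have hpos : 0 < (F.filter (fun e => e.1 = v)).card :=
        Finset.card_pos.2 ⟨(v, w), by simp [hw]⟩
      omega
  have h4 : ∑ v : V, (F.filter (fun e => e.1 = v)).card
      = (Finset.univ.filter (fun v : V => ¬ Root F v)).card := by
    rw [Finset.card_filter]
    exact Finset.sum_congr rfl (fun v _ => by rw [h2 v]; by_cases h : Root F v <;> simp [h])
  rw [h1, h4, Finset.card_filter_add_card_filter_not, Finset.card_univ]

end PF

namespace PF

variable {V : Type*} [DecidableEq V]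

open scoped Classical in
noncomputable def rootOf (F : Finset (V × V)) (a : V) : V :=
  if h : ∃ r, Rel F a r ∧ Root F r then h.choose else a

lemma rootOf_spec [Fintype V] {F : Finset (V × V)} (hf : IsFun F) (hA : Acyc F)
    (hN : NoLoop F) (a : V) : Rel F a (rootOf F a) ∧ Root F (rootOf F a) := by
  have h : ∃ r, Rel F a r ∧ Root F r := exists_root hf hA hN a
  rw [rootOf, dif_pos h]
  exact h.choose_spec

lemma rootOf_eq [Fintype V] {F : Finset (V × V)} (hf : IsFun F) (hA : Acyc F)
    (hN : NoLoop F) {a y : V} (h1 : Rel F a y) (h2 : Root F y) : rootOf F a = y := by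
  obtain ⟨hr1, hr2⟩ := rootOf_spec hf hA hN a
  exact root_unique hf hr1 h1 hr2 h2

lemma rootOf_eq_iff [Fintype V] {F : Finset (V × V)} (hf : IsFun F) (hA : Acyc F)
    (hN : NoLoop F) {a y : V} : rootOf F a = y ↔ (Rel F a y ∧ Root F y) := by
  constructor
  · rintro rfl
    exact rootOf_spec hf hA hN a
  · rintro ⟨h1, h2⟩
    exact rootOf_eq hf hA hN h1 h2

lemma acyc_of_all_rel_root {K : Finset (V × V)} (hf : IsFun K) {r : V} (hr : Root K r)
    (hall : ∀ a, Rel K a r) : Acyc K :=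
  fun a _ hab hba => cyclic_no_root hf hab hba (hall a) hr

/-- Removing the outgoing edge of `y` when everything reaches `y` gives an acyclic graph. -/
lemma acyc_erase_out {K : Finset (V × V)} (hf : IsFun K) {y : V}
    (hall : ∀ a, Rel K a y) : Acyc (K.erase (y, fn K y)) :=
  acyc_of_all_rel_root (isFun_subset (Finset.erase_subset _ _) hf)
    (root_erase_fn hf y) (fun a => rel_erase_to (hall a))

/-- Removing the cycle edge into `y` when everything reaches `y` gives an acyclic graph. -/
lemma acyc_erase_pred {K : Finset (V × V)} (hf : IsFun K) {y z : V}
    (hzy : (z, y) ∈ K) (hyz : Rel K y z) (hall : ∀ a, Rel K a y) : Acyc (K.erase (z, y)) := by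
  have hfz : fn K z = y := fn_eq hf hzy
  have hroot : Root (K.erase (z, y)) z := by
    have := root_erase_fn hf z
    rwa [hfz] at this
  refine acyc_of_all_rel_root (isFun_subset (Finset.erase_subset _ _) hf) hroot ?_
  intro a
  have := rel_erase_or hf (c := z) (hall a)
  rw [hfz] at this
  rcases this with h | h
  · exact h.trans (rel_erase_to (d := y) hyz)
  · exact rel_erase_to h

/-- Transport of acyclicity from deleting `y`'s outgoing edge to deleting the cycle edge
into `y`. -/
lemma acyc_pred_of_out {K : Finset (V × V)} (hf : IsFun K) (hN : NoLoop K) {y z : V}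
    (hzy : (z, y) ∈ K) (hyz : Rel K y z)
    (hA : Acyc (K.erase (y, fn K y))) : Acyc (K.erase (z, y)) := by
  set K' := K.erase (z, y) with hK'
  have hfz : fn K z = y := fn_eq hf hzy
  have hf' : IsFun K' := isFun_subset (Finset.erase_subset _ _) hf
  have hroot : Root K' z := by
    have := root_erase_fn hf z
    rwa [hfz] at this
  intro a b hab hba
  by_cases hay : Rel K' a y
  · have hyz' : Rel K' y z := rel_erase_to hyz
    exact cyclic_no_root hf' hab hba (hay.trans hyz') hroot
  · have hby : ¬ Rel K' b y := fun h => hay (Relation.ReflTransGen.head (hab : forestStep K' a b) h)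
    have h1 : Rel (K'.erase (y, fn K y)) b a := rel_erase_avoid hba hby
    have hsub : K'.erase (y, fn K y) ⊆ K.erase (y, fn K y) :=
      Finset.erase_subset_erase _ (Finset.erase_subset _ _)
    have hay' : a ≠ y := fun h => hay (h ▸ Relation.ReflTransGen.refl)
    have hab' : (a, b) ∈ K.erase (y, fn K y) := by
      refine Finset.mem_erase.2 ⟨by simp [hay'], Finset.mem_of_mem_erase hab⟩
    exact hA hab' (rel_mono hsub h1)

/-- Transport of acyclicity from deleting the cycle edge into `y` to deleting `y`'s
outgoing edge. -/
lemma acyc_out_of_pred {K : Finset (V × V)} (hf : IsFun K) (hN : NoLoop K) {y z : V}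
    (hzy : (z, y) ∈ K) (hyz : Rel K y z)
    (hA : Acyc (K.erase (z, y))) : Acyc (K.erase (y, fn K y)) := by
  set A := K.erase (y, fn K y) with hAdef
  have hf' : IsFun A := isFun_subset (Finset.erase_subset _ _) hf
  have hroot : Root A y := root_erase_fn hf y
  have hzney : z ≠ y := fun h => hN y (h ▸ hzy)
  have hzyA : (z, y) ∈ A := Finset.mem_erase.2 ⟨by simp [hzney], hzy⟩
  intro a b hab hba
  by_cases haz : Rel A a z
  · exact cyclic_no_root hf' hab hba (haz.tail (hzyA : forestStep A z y)) hroot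
  · have hbz : ¬ Rel A b z := fun h => haz (Relation.ReflTransGen.head (hab : forestStep A a b) h)
    have h1 : Rel (A.erase (z, y)) b a := rel_erase_avoid hba hbz
    have hsub : A.erase (z, y) ⊆ K.erase (z, y) :=
      Finset.erase_subset_erase _ (Finset.erase_subset _ _)
    have haz' : a ≠ z := fun h => haz (h ▸ Relation.ReflTransGen.refl)
    have hab' : (a, b) ∈ K.erase (z, y) := by
      refine Finset.mem_erase.2 ⟨by simp [haz'], Finset.mem_of_mem_erase hab⟩
    exact hA hab' (rel_mono hsub h1)

/-- If a functional graph is not acyclic but deleting `y`'s outgoing edge makes it acyclic,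
then `y` lies on a cycle. -/
lemma exists_pred_of_not_acyc {K : Finset (V × V)} (hf : IsFun K) (hN : NoLoop K) {y : V}
    (hA : Acyc (K.erase (y, fn K y))) (hnA : ¬ Acyc K) :
    ∃ z, (z, y) ∈ K ∧ Rel K y z := by
  have hex : ∃ a b, (a, b) ∈ K ∧ Rel K b a := by
    rw [Acyc] at hnA
    push_neg at hnA
    exact hnA
  obtain ⟨a, b, hab, hba⟩ := hex
  have hay : Rel K a y := by
    by_contra hay
    have hby : ¬ Rel K b y := fun h => hay (Relation.ReflTransGen.head (hab : forestStep K a b) h)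
    have h1 : Rel (K.erase (y, fn K y)) b a := rel_erase_avoid hba hby
    have hay' : a ≠ y := fun h => hay (h ▸ Relation.ReflTransGen.refl)
    exact hA (Finset.mem_erase.2 ⟨by simp [hay'], hab⟩) h1
  have hya : Rel K y a := rel_back hf hab hba hay
  have hnrooty : ¬ Root K y := by
    intro hy
    have := root_rel hy hya
    exact hy b (this ▸ hab)
  have hyfn : (y, fn K y) ∈ K := by
    rcases fn_mem_or_root K y with h | h
    · exact h
    · exact absurd h.1 hnrooty
  have hwy : Rel K (fn K y) y := by
    by_cases h : y = a
    · subst h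
      have : b = fn K y := (fn_eq hf hab).symm
      exact this ▸ hba
    · rcases Relation.ReflTransGen.cases_head hya with h' | ⟨c, hc1, hc2⟩
      · exact absurd h' h
      · have : c = fn K y := (fn_eq hf hc1).symm
        exact (this ▸ hc2).trans hay
  rcases Relation.ReflTransGen.cases_tail hwy with h | ⟨z, hz1, hz2⟩
  · exfalso
    rw [← h] at hyfn
    exact hN y hyfn
  · exact ⟨z, hz2, Relation.ReflTransGen.head (hyfn : forestStep K y (fn K y)) hz1⟩

/-- In a tree (forest with `N - 1` edges), every vertex reaches the root. -/
lemma tree_all_rel [Fintype V] [Nonempty V] {K : Finset (V × V)} (hf : IsFun K) (hA : Acyc K)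
    (hN : NoLoop K) (hcard : K.card = Fintype.card V - 1) {y : V} (hy : Root K y) :
    ∀ a, Rel K a y := by
  classical
  have hNpos : 1 ≤ Fintype.card V := Fintype.card_pos
  have hroots := card_roots hf
  rw [hcard] at hroots
  have hcard1 : (Finset.univ.filter (fun v : V => Root K v)).card ≤ 1 := by omega
  intro a
  obtain ⟨r, har, hr⟩ := exists_root hf hA hN a
  have : r = y := by
    have h1 : r ∈ Finset.univ.filter (fun v : V => Root K v) := by simp [hr]
    have h2 : y ∈ Finset.univ.filter (fun v : V => Root K v) := by simp [hy]
    exact Finset.card_le_one.1 hcard1 _ h1 _ h2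
  exact this ▸ har

end PF

namespace PF

open scoped Classical

variable {V : Type*} [DecidableEq V] [Fintype V]

lemma weightSum_eq (k : V → V → ℝ) (P : Finset (V × V) → Prop) :
    weightSum k P = ∑ F ∈ Finset.univ.filter P, forestWeight k F := by
  rw [weightSum, Finset.sum_filter]
  refine Finset.sum_congr rfl (fun F _ => ?_)
  rw [Set.indicator_apply]
  simp [Set.mem_setOf_eq]

variable {G : SimpleGraph V}

lemma forest_isFun {F : Finset (V × V)} (h : IsRootedForest G F) : IsFun F :=
  isFun_of_card h.2.1

lemma forest_acyc {F : Finset (V × V)} (h : IsRootedForest G F) : Acyc F :=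
  fun a b hab hr => h.2.2 a b hab hr

lemma forest_noLoop {F : Finset (V × V)} (h : IsRootedForest G F) : NoLoop F :=
  noLoop_of_adj h.1

lemma mk_forest {F : Finset (V × V)} (h1 : ∀ e ∈ F, G.Adj e.1 e.2) (h2 : IsFun F)
    (h3 : Acyc F) : IsRootedForest G F :=
  ⟨h1, card_filter_of_isFun h2, fun a b hab hr => h3 hab hr⟩

noncomputable def cycPred (K : Finset (V × V)) (y : V) : V :=
  if h : ∃ z, (z, y) ∈ K ∧ Rel K y z then h.choose else y

lemma cycPred_spec {K : Finset (V × V)} {y : V} (h : ∃ z, (z, y) ∈ K ∧ Rel K y z) :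
    (cycPred K y, y) ∈ K ∧ Rel K y (cycPred K y) := by
  rw [cycPred, dif_pos h]
  exact h.choose_spec

lemma cycPred_eq {K : Finset (V × V)} (hf : IsFun K) {y z : V}
    (h1 : (z, y) ∈ K) (h2 : Rel K y z) : cycPred K y = z := by
  have hex : ∃ z, (z, y) ∈ K ∧ Rel K y z := ⟨z, h1, h2⟩
  obtain ⟨hc1, hc2⟩ := cycPred_spec hex
  exact pred_unique hf hc1 h1 hc2 h2

lemma no_root_of_card_full {K : Finset (V × V)} (hf : IsFun K)
    (hcard : K.card = Fintype.card V) (v : V) : ¬ Root K v := by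
  intro hv
  have h := card_roots hf
  rw [hcard] at h
  have h0 : (Finset.univ.filter (fun v : V => Root K v)).card = 0 := by omega
  rw [Finset.card_eq_zero] at h0
  have : v ∈ Finset.univ.filter (fun v : V => Root K v) := by simp [hv]
  simp [h0] at this

/-- The predicate for unicyclic covers of `y`. -/
def UniP (G : SimpleGraph V) (y : V) (K : Finset (V × V)) : Prop :=
  (∀ e ∈ K, G.Adj e.1 e.2) ∧ IsFun K ∧ K.card = Fintype.card V ∧ ∀ a, Rel K a y

/-- First bijection of the tree theorem: trees with a marked edge from the root to `y`
correspond to unicyclic covers of `y`. -/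
lemma treeThm_bijA {k : V → V → ℝ} (hkpos : ∀ x y, G.Adj x y → 0 < k x y)
    (hk0 : ∀ x y, ¬ G.Adj x y → k x y = 0) (y : V) :
    ∑ T ∈ Finset.univ.filter (fun T =>
        IsRootedForest G T ∧ T.card = Fintype.card V - 1),
      forestWeight k T * k (rootOf T y) y
    = ∑ K ∈ Finset.univ.filter (fun K => UniP G y K), forestWeight k K := by
  haveI : Nonempty V := ⟨y⟩
  have hNpos : 1 ≤ Fintype.card V := Fintype.card_pos (α := V)
  rw [← Finset.sum_filter_of_ne (p := fun T => G.Adj (rootOf T y) y)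
    (by
      intro T _ hne
      by_contra hadj
      rw [hk0 _ _ hadj, mul_zero] at hne
      exact hne rfl)]
  refine Finset.sum_nbij' (fun T => insert (rootOf T y, y) T)
    (fun K => K.erase (cycPred K y, y)) ?_ ?_ ?_ ?_ ?_
  · -- forward membership
    intro T hT
    simp only [Finset.mem_filter, Finset.mem_univ, true_and] at hT ⊢
    obtain ⟨⟨hF, hcard⟩, hadj⟩ := hT
    have hf := forest_isFun hF
    have hA := forest_acyc hF
    have hN := forest_noLoop hF
    obtain ⟨hrel, hroot⟩ := rootOf_spec hf hA hN y
    set r := rootOf T y with hr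
    have hni : (r, y) ∉ T := fun h => hroot y h
    refine ⟨?_, isFun_insert hf hroot, ?_, ?_⟩
    · intro e he
      rcases Finset.mem_insert.1 he with he | he
      · obtain ⟨h1, h2⟩ := pair_eq he
        rw [h1, h2]; exact hadj
      · exact hF.1 e he
    · rw [Finset.card_insert_of_notMem hni, hcard]
      omega
    · intro a
      have h1 : Rel T a r := tree_all_rel hf hA hN hcard hroot a
      exact (rel_mono (Finset.subset_insert _ _) h1).tail (Finset.mem_insert_self _ _)
  · -- backward membership
    intro K hK
    simp only [Finset.mem_filter, Finset.mem_univ, true_and] at hK ⊢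
    obtain ⟨hsub, hf, hcard, hall⟩ := hK
    have hN : NoLoop K := noLoop_of_adj hsub
    have hnr : ¬ Root K y := no_root_of_card_full hf hcard y
    have hyfn : (y, fn K y) ∈ K := by
      rcases fn_mem_or_root K y with h | h
      · exact h
      · exact absurd h.1 hnr
    have hex : ∃ z, (z, y) ∈ K ∧ Rel K y z := by
      have hwy : Rel K (fn K y) y := hall _
      rcases Relation.ReflTransGen.cases_tail hwy with h | ⟨z, hz1, hz2⟩
      · exfalso; rw [← h] at hyfn; exact hN y hyfn
      · exact ⟨z, hz2, Relation.ReflTransGen.head (hyfn : forestStep K y (fn K y)) hz1⟩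
    obtain ⟨hc1, hc2⟩ := cycPred_spec hex
    set z := cycPred K y with hz
    have hsub' : K.erase (z, y) ⊆ K := Finset.erase_subset _ _
    have hfz : fn K z = y := fn_eq hf hc1
    have hrootz : Root (K.erase (z, y)) z := by
      have := root_erase_fn hf z
      rwa [hfz] at this
    have hAerase : Acyc (K.erase (z, y)) := acyc_erase_pred hf hc1 hc2 hall
    refine ⟨⟨mk_forest (fun e he => hsub e (hsub' he))
        (isFun_subset hsub' hf) hAerase, ?_⟩, ?_⟩
    · rw [Finset.card_erase_of_mem hc1, hcard]
    · have hrel : Rel (K.erase (z, y)) y z := rel_erase_to hc2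
      rw [rootOf_eq (isFun_subset hsub' hf) hAerase
        (noLoop_of_adj (fun e he => hsub e (hsub' he))) hrel hrootz]
      exact hsub _ hc1
  · -- left inverse
    intro T hT
    simp only [Finset.mem_filter, Finset.mem_univ, true_and] at hT
    obtain ⟨⟨hF, hcard⟩, hadj⟩ := hT
    have hf := forest_isFun hF
    have hA := forest_acyc hF
    have hN := forest_noLoop hF
    obtain ⟨hrel, hroot⟩ := rootOf_spec hf hA hN y
    set r := rootOf T y with hr
    have hni : (r, y) ∉ T := fun h => hroot y h
    set K := insert (r, y) T with hK
    have hfK : IsFun K := isFun_insert hf hroot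
    have h1 : (r, y) ∈ K := Finset.mem_insert_self _ _
    have h2 : Rel K y r :=
      rel_mono (Finset.subset_insert _ _) (tree_all_rel hf hA hN hcard hroot y)
    rw [cycPred_eq hfK h1 h2]
    exact Finset.erase_insert hni
  · -- right inverse
    intro K hK
    simp only [Finset.mem_filter, Finset.mem_univ, true_and] at hK
    obtain ⟨hsub, hf, hcard, hall⟩ := hK
    have hN : NoLoop K := noLoop_of_adj hsub
    have hnr : ¬ Root K y := no_root_of_card_full hf hcard y
    have hyfn : (y, fn K y) ∈ K := by
      rcases fn_mem_or_root K y with h | h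
      · exact h
      · exact absurd h.1 hnr
    have hex : ∃ z, (z, y) ∈ K ∧ Rel K y z := by
      have hwy : Rel K (fn K y) y := hall _
      rcases Relation.ReflTransGen.cases_tail hwy with h | ⟨z, hz1, hz2⟩
      · exfalso; rw [← h] at hyfn; exact hN y hyfn
      · exact ⟨z, hz2, Relation.ReflTransGen.head (hyfn : forestStep K y (fn K y)) hz1⟩
    obtain ⟨hc1, hc2⟩ := cycPred_spec hex
    set z := cycPred K y with hz
    have hsub' : K.erase (z, y) ⊆ K := Finset.erase_subset _ _
    have hfz : fn K z = y := fn_eq hf hc1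
    have hrootz : Root (K.erase (z, y)) z := by
      have := root_erase_fn hf z
      rwa [hfz] at this
    have hAerase : Acyc (K.erase (z, y)) := acyc_erase_pred hf hc1 hc2 hall
    have hrel : Rel (K.erase (z, y)) y z := rel_erase_to hc2
    rw [rootOf_eq (isFun_subset hsub' hf) hAerase
      (noLoop_of_adj (fun e he => hsub e (hsub' he))) hrel hrootz]
    exact Finset.insert_erase hc1
  · -- weights
    intro T hT
    simp only [Finset.mem_filter, Finset.mem_univ, true_and] at hT
    obtain ⟨⟨hF, hcard⟩, hadj⟩ := hT
    have hroot := (rootOf_spec (forest_isFun hF) (forest_acyc hF) (forest_noLoop hF) y).2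
    have hni : (rootOf T y, y) ∉ T := fun h => hroot y h
    have hw : forestWeight k (insert (rootOf T y, y) T) =
        k (rootOf T y) y * forestWeight k T := Finset.prod_insert hni
    rw [hw, mul_comm]

end PF

namespace PF

open scoped Classical

variable {V : Type*} [DecidableEq V] [Fintype V] {G : SimpleGraph V}

/-- Second bijection of the tree theorem: trees rooted at `y` with a marked edge out of
`y` correspond to unicyclic covers of `y`. -/
lemma treeThm_bijB {k : V → V → ℝ}
    (hk0 : ∀ x y, ¬ G.Adj x y → k x y = 0) (y : V) :
    ∑ T ∈ Finset.univ.filter (fun T =>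
        (IsRootedForest G T ∧ T.card = Fintype.card V - 1) ∧ Root T y),
      forestWeight k T * (∑ w : V, k y w)
    = ∑ K ∈ Finset.univ.filter (fun K => UniP G y K), forestWeight k K := by
  haveI : Nonempty V := ⟨y⟩
  have hNpos : 1 ≤ Fintype.card V := Fintype.card_pos (α := V)
  rw [show (∑ T ∈ Finset.univ.filter (fun T =>
        (IsRootedForest G T ∧ T.card = Fintype.card V - 1) ∧ Root T y),
      forestWeight k T * (∑ w : V, k y w))
    = ∑ p ∈ (Finset.univ.filter (fun T =>
        (IsRootedForest G T ∧ T.card = Fintype.card V - 1) ∧ Root T y)) ×ˢ Finset.univ,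
      forestWeight k p.1 * k y p.2 by
    rw [Finset.sum_product]
    exact Finset.sum_congr rfl (fun T _ => by rw [Finset.mul_sum])]
  rw [← Finset.sum_filter_of_ne (p := fun p => G.Adj y p.2)
    (by
      intro p _ hne
      by_contra hadj
      rw [hk0 _ _ hadj, mul_zero] at hne
      exact hne rfl)]
  refine Finset.sum_nbij' (fun p => insert (y, p.2) p.1)
    (fun K => (K.erase (y, fn K y), fn K y)) ?_ ?_ ?_ ?_ ?_
  · intro p hp
    simp only [Finset.mem_filter, Finset.mem_product, Finset.mem_univ, true_and,
      and_true] at hp ⊢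
    obtain ⟨⟨⟨hF, hcard⟩, hrooty⟩, hadj⟩ := hp
    have hf := forest_isFun hF
    have hni : (y, p.2) ∉ p.1 := fun h => hrooty _ h
    refine ⟨?_, isFun_insert hf hrooty, ?_, ?_⟩
    · intro e he
      rcases Finset.mem_insert.1 he with he | he
      · obtain ⟨h1, h2⟩ := pair_eq he
        rw [h1, h2]; exact hadj
      · exact hF.1 e he
    · rw [Finset.card_insert_of_notMem hni, hcard]; omega
    · intro a
      exact rel_mono (Finset.subset_insert _ _)
        (tree_all_rel hf (forest_acyc hF) (forest_noLoop hF) hcard hrooty a)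
  · intro K hK
    simp only [Finset.mem_filter, Finset.mem_product, Finset.mem_univ, true_and,
      and_true] at hK ⊢
    obtain ⟨hsub, hf, hcard, hall⟩ := hK
    have hnr : ¬ Root K y := no_root_of_card_full hf hcard y
    have hyfn : (y, fn K y) ∈ K := by
      rcases fn_mem_or_root K y with h | h
      · exact h
      · exact absurd h.1 hnr
    have hsub' : K.erase (y, fn K y) ⊆ K := Finset.erase_subset _ _
    refine ⟨⟨⟨mk_forest (fun e he => hsub e (hsub' he)) (isFun_subset hsub' hf)
        (acyc_erase_out hf hall), ?_⟩, root_erase_fn hf y⟩, hsub _ hyfn⟩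
    rw [Finset.card_erase_of_mem hyfn, hcard]
  · intro p hp
    simp only [Finset.mem_filter, Finset.mem_product, Finset.mem_univ, true_and,
      and_true] at hp
    obtain ⟨⟨⟨hF, hcard⟩, hrooty⟩, hadj⟩ := hp
    have hni : (y, p.2) ∉ p.1 := fun h => hrooty _ h
    have hfK : IsFun (insert (y, p.2) p.1) := isFun_insert (forest_isFun hF) hrooty
    have hfn : fn (insert (y, p.2) p.1) y = p.2 := fn_eq hfK (Finset.mem_insert_self _ _)
    rw [hfn, Finset.erase_insert hni]
  · intro K hK
    simp only [Finset.mem_filter, Finset.mem_univ, true_and] at hK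
    obtain ⟨hsub, hf, hcard, hall⟩ := hK
    have hnr : ¬ Root K y := no_root_of_card_full hf hcard y
    have hyfn : (y, fn K y) ∈ K := by
      rcases fn_mem_or_root K y with h | h
      · exact h
      · exact absurd h.1 hnr
    dsimp only
    exact Finset.insert_erase hyfn
  · intro p hp
    simp only [Finset.mem_filter, Finset.mem_product, Finset.mem_univ, true_and,
      and_true] at hp
    obtain ⟨⟨⟨hF, hcard⟩, hrooty⟩, hadj⟩ := hp
    have hni : (y, p.2) ∉ p.1 := fun h => hrooty _ h
    have hw : forestWeight k (insert (y, p.2) p.1) = k y p.2 * forestWeight k p.1 :=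
      Finset.prod_insert hni
    rw [hw, mul_comm]

/-- The Markov chain tree theorem: the tree vector is a left null vector of `L`. -/
lemma treeThm {k : V → V → ℝ} (hkpos : ∀ x y, G.Adj x y → 0 < k x y)
    (hk0 : ∀ x y, ¬ G.Adj x y → k x y = 0) {L : Matrix V V ℝ}
    (hL : ∀ x y, L x y = if x = y then -(∑ z ∈ Finset.univ.erase x, k x z) else k x y)
    (y : V) :
    ∑ x, (weightSum k (fun F => IsRootedForest G F ∧ F.card = Fintype.card V - 1 ∧
      RootedAt F x x)) * L x y = 0 := by
  haveI : Nonempty V := ⟨y⟩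
  have hkyy : k y y = 0 := hk0 y y (G.loopless.irrefl y)
  have hτ_eq : ∀ x, weightSum k (fun F => IsRootedForest G F ∧ F.card = Fintype.card V - 1 ∧
      RootedAt F x x)
      = ∑ T ∈ (Finset.univ.filter (fun T : Finset (V × V) =>
          IsRootedForest G T ∧ T.card = Fintype.card V - 1)).filter
          (fun T => rootOf T y = x), forestWeight k T := by
    intro x
    rw [weightSum_eq]
    refine Finset.sum_congr ?_ (fun _ _ => rfl)
    ext T
    simp only [Finset.mem_filter, Finset.mem_univ, true_and, and_assoc]
    constructor
    · rintro ⟨hF, hcard, hrel, hroot⟩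
      exact ⟨hF, hcard, rootOf_eq (forest_isFun hF) (forest_acyc hF) (forest_noLoop hF)
        (tree_all_rel (forest_isFun hF) (forest_acyc hF) (forest_noLoop hF) hcard hroot y)
        hroot⟩
    · rintro ⟨hF, hcard, hx⟩
      obtain ⟨h1, h2⟩ := rootOf_spec (forest_isFun hF) (forest_acyc hF) (forest_noLoop hF) y
      rw [hx] at h2
      exact ⟨hF, hcard, Relation.ReflTransGen.refl, h2⟩
  -- the main combinatorial identity
  have hmain : ∑ x, (weightSum k (fun F => IsRootedForest G F ∧
        F.card = Fintype.card V - 1 ∧ RootedAt F x x)) * k x y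
      = (weightSum k (fun F => IsRootedForest G F ∧ F.card = Fintype.card V - 1 ∧
        RootedAt F y y)) * (∑ w : V, k y w) := by
    have h1 : ∑ x, (weightSum k (fun F => IsRootedForest G F ∧
          F.card = Fintype.card V - 1 ∧ RootedAt F x x)) * k x y
        = ∑ x, ∑ T ∈ (Finset.univ.filter (fun T : Finset (V × V) =>
            IsRootedForest G T ∧ T.card = Fintype.card V - 1)).filter
            (fun T => rootOf T y = x),
            forestWeight k T * k (rootOf T y) y := by
      refine Finset.sum_congr rfl (fun x _ => ?_)
      rw [hτ_eq x, Finset.sum_mul]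
      refine Finset.sum_congr rfl (fun T hT => ?_)
      rw [(Finset.mem_filter.1 hT).2]
    rw [h1, Finset.sum_fiberwise _ (fun T => rootOf T y)
      (fun T => forestWeight k T * k (rootOf T y) y)]
    rw [treeThm_bijA hkpos hk0 y, ← treeThm_bijB hk0 y]
    rw [hτ_eq y, Finset.sum_mul]
    refine Finset.sum_congr ?_ (fun _ _ => rfl)
    ext T
    simp only [Finset.mem_filter, Finset.mem_univ, true_and, and_assoc]
    constructor
    · rintro ⟨hF, hcard, hroot⟩
      exact ⟨hF, hcard, rootOf_eq (forest_isFun hF) (forest_acyc hF) (forest_noLoop hF)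
        (tree_all_rel (forest_isFun hF) (forest_acyc hF) (forest_noLoop hF) hcard hroot y)
        hroot⟩
    · rintro ⟨hF, hcard, hx⟩
      obtain ⟨h1, h2⟩ := rootOf_spec (forest_isFun hF) (forest_acyc hF) (forest_noLoop hF) y
      rw [hx] at h2
      exact ⟨hF, hcard, h2⟩
  -- assembling
  have hpt : ∀ x, (weightSum k (fun F => IsRootedForest G F ∧
        F.card = Fintype.card V - 1 ∧ RootedAt F x x)) * L x y
      = (weightSum k (fun F => IsRootedForest G F ∧ F.card = Fintype.card V - 1 ∧
        RootedAt F x x)) * k x y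
        - (if x = y then (weightSum k (fun F => IsRootedForest G F ∧
            F.card = Fintype.card V - 1 ∧ RootedAt F y y)) * (∑ w : V, k y w) else 0) := by
    intro x
    by_cases hxy : x = y
    · subst hxy
      rw [hL, if_pos rfl, if_pos rfl]
      have he : ∑ z ∈ Finset.univ.erase x, k x z = (∑ w : V, k x w) - k x x := by
        rw [← Finset.sum_erase_eq_sub (Finset.mem_univ x)]
      rw [he, hkyy]
      ring
    · rw [hL, if_neg hxy, if_neg hxy, sub_zero]
  rw [Finset.sum_congr rfl (fun x _ => hpt x), Finset.sum_sub_distrib,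
    Finset.sum_ite_eq' Finset.univ y, if_pos (Finset.mem_univ y), hmain, sub_self]

end PF

namespace PF

open scoped Classical

variable {V : Type*} [DecidableEq V] [Fintype V] {G : SimpleGraph V}

noncomputable def pathPred (K : Finset (V × V)) (x y : V) : V :=
  if h : ∃ z, (z, y) ∈ K ∧ Rel K x z then h.choose else x

lemma pathPred_spec {K : Finset (V × V)} {x y : V} (h : ∃ z, (z, y) ∈ K ∧ Rel K x z) :
    (pathPred K x y, y) ∈ K ∧ Rel K x (pathPred K x y) := by
  rw [pathPred, dif_pos h]
  exact h.choose_spec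

lemma pathPred_eq {K : Finset (V × V)} (hf : IsFun K) (hA : Acyc K) {x y z : V}
    (h1 : (z, y) ∈ K) (h2 : Rel K x z) : pathPred K x y = z := by
  obtain ⟨hc1, hc2⟩ := pathPred_spec ⟨z, h1, h2⟩
  set z' := pathPred K x y
  by_contra hne
  have key : ∀ a b : V, (a, y) ∈ K → (b, y) ∈ K → Rel K a b → a = b := by
    intro a b ha hb hab
    rcases Relation.ReflTransGen.cases_head hab with h | ⟨c, hc, hcb⟩
    · exact h
    · have hcy : c = y := hf hc ha
      rw [hcy] at hcb
      exact absurd hcb (hA hb)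
  rcases rel_total hf hc2 h2 with h | h
  · exact hne (key _ _ hc1 h1 h)
  · exact hne (key _ _ h1 hc1 h).symm

/-- Two-rooted forests whose marked tree-root is adjacent to `y`, where `y` lies in the
marked tree (cycle case), correspond to functional graphs with `N - 1` edges containing a
cycle through `y`, with `x` reaching `y`. -/
lemma bijC1cyc {k : V → V → ℝ} (x y : V) :
    ∑ F ∈ ((Finset.univ.filter (fun F : Finset (V × V) =>
        IsRootedForest G F ∧ F.card = Fintype.card V - 2)).filter
        (fun F => G.Adj (rootOf F x) y ∧ Rel F y (rootOf F x))),
      forestWeight k F * k (rootOf F x) y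
    = ∑ K ∈ Finset.univ.filter (fun K : Finset (V × V) =>
        (∀ e ∈ K, G.Adj e.1 e.2) ∧ IsFun K ∧ K.card = Fintype.card V - 1 ∧ Rel K x y ∧
        ∃ z, (z, y) ∈ K ∧ Rel K y z ∧ Acyc (K.erase (z, y))), forestWeight k K := by
  refine Finset.sum_nbij' (fun F => insert (rootOf F x, y) F)
    (fun K => K.erase (cycPred K y, y)) ?_ ?_ ?_ ?_ ?_
  · intro F hF
    simp only [Finset.mem_filter, Finset.mem_univ, true_and] at hF ⊢
    obtain ⟨⟨hFor, hcard⟩, hadj, hcy⟩ := hF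
    have hf := forest_isFun hFor
    have hA := forest_acyc hFor
    have hN := forest_noLoop hFor
    obtain ⟨hrel, hroot⟩ := rootOf_spec hf hA hN x
    set r := rootOf F x with hr
    have hni : (r, y) ∉ F := fun h => hroot y h
    have hN2 : 2 ≤ Fintype.card V := by
      haveI : Nontrivial V := ⟨⟨r, y, G.ne_of_adj hadj⟩⟩
      exact Fintype.one_lt_card
    refine ⟨?_, isFun_insert hf hroot, ?_, ?_, r, Finset.mem_insert_self _ _,
      rel_mono (Finset.subset_insert _ _) hcy, ?_⟩
    · intro e he
      rcases Finset.mem_insert.1 he with he | he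
      · obtain ⟨h1, h2⟩ := pair_eq he
        rw [h1, h2]; exact hadj
      · exact hFor.1 e he
    · rw [Finset.card_insert_of_notMem hni, hcard]; omega
    · exact (rel_mono (Finset.subset_insert _ _) hrel).tail (Finset.mem_insert_self _ _)
    · rw [Finset.erase_insert hni]
      exact hA
  · intro K hK
    simp only [Finset.mem_filter, Finset.mem_univ, true_and] at hK ⊢
    obtain ⟨hsub, hf, hcard, hxy, z₀, hz1, hz2, hz3⟩ := hK
    have hz : cycPred K y = z₀ := cycPred_eq hf hz1 hz2
    rw [hz]
    have hsub' : K.erase (z₀, y) ⊆ K := Finset.erase_subset _ _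
    have hfz : fn K z₀ = y := fn_eq hf hz1
    have hrootz : Root (K.erase (z₀, y)) z₀ := by
      have := root_erase_fn hf z₀
      rwa [hfz] at this
    have hfor : IsRootedForest G (K.erase (z₀, y)) :=
      mk_forest (fun e he => hsub e (hsub' he)) (isFun_subset hsub' hf) hz3
    have hxz : Rel (K.erase (z₀, y)) x z₀ := rel_erase_to (hxy.trans hz2)
    have hro : rootOf (K.erase (z₀, y)) x = z₀ :=
      rootOf_eq (isFun_subset hsub' hf) hz3 (forest_noLoop hfor) hxz hrootz
    refine ⟨⟨hfor, ?_⟩, ?_, ?_⟩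
    · rw [Finset.card_erase_of_mem hz1, hcard]; omega
    · rw [hro]; exact hsub _ hz1
    · rw [hro]; exact rel_erase_to hz2
  · intro F hF
    simp only [Finset.mem_filter, Finset.mem_univ, true_and] at hF
    obtain ⟨⟨hFor, hcard⟩, hadj, hcy⟩ := hF
    have hf := forest_isFun hFor
    obtain ⟨hrel, hroot⟩ := rootOf_spec hf (forest_acyc hFor) (forest_noLoop hFor) x
    have hni : (rootOf F x, y) ∉ F := fun h => hroot y h
    have h1 : (rootOf F x, y) ∈ insert (rootOf F x, y) F := Finset.mem_insert_self _ _
    have h2 : Rel (insert (rootOf F x, y) F) y (rootOf F x) :=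
      rel_mono (Finset.subset_insert _ _) hcy
    rw [cycPred_eq (isFun_insert hf hroot) h1 h2, Finset.erase_insert hni]
  · intro K hK
    simp only [Finset.mem_filter, Finset.mem_univ, true_and] at hK
    obtain ⟨hsub, hf, hcard, hxy, z₀, hz1, hz2, hz3⟩ := hK
    have hz : cycPred K y = z₀ := cycPred_eq hf hz1 hz2
    rw [hz]
    have hsub' : K.erase (z₀, y) ⊆ K := Finset.erase_subset _ _
    have hfz : fn K z₀ = y := fn_eq hf hz1
    have hrootz : Root (K.erase (z₀, y)) z₀ := by
      have := root_erase_fn hf z₀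
      rwa [hfz] at this
    have hfor : IsRootedForest G (K.erase (z₀, y)) :=
      mk_forest (fun e he => hsub e (hsub' he)) (isFun_subset hsub' hf) hz3
    have hxz : Rel (K.erase (z₀, y)) x z₀ := rel_erase_to (hxy.trans hz2)
    have hro : rootOf (K.erase (z₀, y)) x = z₀ :=
      rootOf_eq (isFun_subset hsub' hf) hz3 (forest_noLoop hfor) hxz hrootz
    rw [hro, Finset.insert_erase hz1]
  · intro F hF
    simp only [Finset.mem_filter, Finset.mem_univ, true_and] at hF
    obtain ⟨⟨hFor, hcard⟩, hadj, hcy⟩ := hF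
    obtain ⟨hrel, hroot⟩ :=
      rootOf_spec (forest_isFun hFor) (forest_acyc hFor) (forest_noLoop hFor) x
    have hni : (rootOf F x, y) ∉ F := fun h => hroot y h
    have hw : forestWeight k (insert (rootOf F x, y) F) =
        k (rootOf F x) y * forestWeight k F := Finset.prod_insert hni
    rw [hw, mul_comm]

/-- Tree case of the left-hand side bijection. -/
lemma bijC1tree {k : V → V → ℝ} (x y : V) :
    ∑ F ∈ ((Finset.univ.filter (fun F : Finset (V × V) =>
        IsRootedForest G F ∧ F.card = Fintype.card V - 2)).filter
        (fun F => G.Adj (rootOf F x) y ∧ ¬ Rel F y (rootOf F x))),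
      forestWeight k F * k (rootOf F x) y
    = ∑ K ∈ Finset.univ.filter (fun K : Finset (V × V) =>
        (IsRootedForest G K ∧ K.card = Fintype.card V - 1) ∧ Rel K x y ∧ x ≠ y),
      forestWeight k K := by
  refine Finset.sum_nbij' (fun F => insert (rootOf F x, y) F)
    (fun K => K.erase (pathPred K x y, y)) ?_ ?_ ?_ ?_ ?_
  · intro F hF
    simp only [Finset.mem_filter, Finset.mem_univ, true_and] at hF ⊢
    obtain ⟨⟨hFor, hcard⟩, hadj, hnc⟩ := hF
    have hf := forest_isFun hFor
    have hA := forest_acyc hFor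
    have hN := forest_noLoop hFor
    obtain ⟨hrel, hroot⟩ := rootOf_spec hf hA hN x
    set r := rootOf F x with hr
    have hni : (r, y) ∉ F := fun h => hroot y h
    have hN2 : 2 ≤ Fintype.card V := by
      haveI : Nontrivial V := ⟨⟨r, y, G.ne_of_adj hadj⟩⟩
      exact Fintype.one_lt_card
    have hxney : x ≠ y := by
      rintro rfl
      exact hnc hrel
    refine ⟨⟨⟨?_, ?_, ?_⟩, ?_⟩, ?_, hxney⟩
    · intro e he
      rcases Finset.mem_insert.1 he with he | he
      · obtain ⟨h1, h2⟩ := pair_eq he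
        rw [h1, h2]; exact hadj
      · exact hFor.1 e he
    · exact card_filter_of_isFun (isFun_insert hf hroot)
    · intro a b hab hba
      exact acyc_insert hA hroot hnc hab hba
    · rw [Finset.card_insert_of_notMem hni, hcard]; omega
    · exact (rel_mono (Finset.subset_insert _ _) hrel).tail (Finset.mem_insert_self _ _)
  · intro K hK
    simp only [Finset.mem_filter, Finset.mem_univ, true_and] at hK ⊢
    obtain ⟨⟨hFor, hcard⟩, hxy, hxney⟩ := hK
    have hf := forest_isFun hFor
    have hA := forest_acyc hFor
    have hN := forest_noLoop hFor
    have hex : ∃ z, (z, y) ∈ K ∧ Rel K x z := by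
      rcases Relation.ReflTransGen.cases_tail hxy with h | ⟨c, hc1, hc2⟩
      · exact absurd h.symm hxney
      · exact ⟨c, hc2, hc1⟩
    obtain ⟨hc1, hc2⟩ := pathPred_spec hex
    set z := pathPred K x y with hz
    have hsub' : K.erase (z, y) ⊆ K := Finset.erase_subset _ _
    have hfz : fn K z = y := fn_eq hf hc1
    have hrootz : Root (K.erase (z, y)) z := by
      have := root_erase_fn hf z
      rwa [hfz] at this
    have hAz : Acyc (K.erase (z, y)) := acyc_subset hsub' hA
    have hfor : IsRootedForest G (K.erase (z, y)) :=
      mk_forest (fun e he => hFor.1 e (hsub' he)) (isFun_subset hsub' hf) hAz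
    have hxz : Rel (K.erase (z, y)) x z := rel_erase_to hc2
    have hro : rootOf (K.erase (z, y)) x = z :=
      rootOf_eq (isFun_subset hsub' hf) hAz (forest_noLoop hfor) hxz hrootz
    refine ⟨⟨hfor, ?_⟩, ?_, ?_⟩
    · rw [Finset.card_erase_of_mem hc1, hcard]; omega
    · rw [hro]; exact hFor.1 _ hc1
    · rw [hro]
      intro hrelyz
      exact hA hc1 (rel_mono hsub' hrelyz)
  · intro F hF
    simp only [Finset.mem_filter, Finset.mem_univ, true_and] at hF
    obtain ⟨⟨hFor, hcard⟩, hadj, hnc⟩ := hF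
    have hf := forest_isFun hFor
    have hA := forest_acyc hFor
    obtain ⟨hrel, hroot⟩ := rootOf_spec hf hA (forest_noLoop hFor) x
    have hni : (rootOf F x, y) ∉ F := fun h => hroot y h
    have hAK : Acyc (insert (rootOf F x, y) F) := acyc_insert hA hroot hnc
    have h1 : (rootOf F x, y) ∈ insert (rootOf F x, y) F := Finset.mem_insert_self _ _
    have h2 : Rel (insert (rootOf F x, y) F) x (rootOf F x) :=
      rel_mono (Finset.subset_insert _ _) hrel
    rw [pathPred_eq (isFun_insert hf hroot) hAK h1 h2, Finset.erase_insert hni]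
  · intro K hK
    simp only [Finset.mem_filter, Finset.mem_univ, true_and] at hK
    obtain ⟨⟨hFor, hcard⟩, hxy, hxney⟩ := hK
    have hf := forest_isFun hFor
    have hA := forest_acyc hFor
    have hex : ∃ z, (z, y) ∈ K ∧ Rel K x z := by
      rcases Relation.ReflTransGen.cases_tail hxy with h | ⟨c, hc1, hc2⟩
      · exact absurd h.symm hxney
      · exact ⟨c, hc2, hc1⟩
    obtain ⟨hc1, hc2⟩ := pathPred_spec hex
    set z := pathPred K x y with hz
    have hsub' : K.erase (z, y) ⊆ K := Finset.erase_subset _ _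
    have hfz : fn K z = y := fn_eq hf hc1
    have hrootz : Root (K.erase (z, y)) z := by
      have := root_erase_fn hf z
      rwa [hfz] at this
    have hAz : Acyc (K.erase (z, y)) := acyc_subset hsub' hA
    have hfor : IsRootedForest G (K.erase (z, y)) :=
      mk_forest (fun e he => hFor.1 e (hsub' he)) (isFun_subset hsub' hf) hAz
    have hxz : Rel (K.erase (z, y)) x z := rel_erase_to hc2
    have hro : rootOf (K.erase (z, y)) x = z :=
      rootOf_eq (isFun_subset hsub' hf) hAz (forest_noLoop hfor) hxz hrootz
    rw [hro, Finset.insert_erase hc1]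
  · intro F hF
    simp only [Finset.mem_filter, Finset.mem_univ, true_and] at hF
    obtain ⟨⟨hFor, hcard⟩, hadj, hnc⟩ := hF
    obtain ⟨hrel, hroot⟩ :=
      rootOf_spec (forest_isFun hFor) (forest_acyc hFor) (forest_noLoop hFor) x
    have hni : (rootOf F x, y) ∉ F := fun h => hroot y h
    have hw : forestWeight k (insert (rootOf F x, y) F) =
        k (rootOf F x) y * forestWeight k F := Finset.prod_insert hni
    rw [hw, mul_comm]

end PF

namespace PF

open scoped Classical

variable {V : Type*} [DecidableEq V] [Fintype V] {G : SimpleGraph V}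

/-- Right-hand side bijection: forests rooted at `y` (with `x` in `y`'s tree) with a marked
edge out of `y` correspond to functional graphs where deleting `y`'s outgoing edge is
acyclic. -/
lemma bijC1R {k : V → V → ℝ} (x y : V) :
    ∑ p ∈ (((Finset.univ.filter (fun F : Finset (V × V) =>
        IsRootedForest G F ∧ F.card = Fintype.card V - 2)).filter
        (fun F => rootOf F x = y)) ×ˢ Finset.univ).filter (fun p => G.Adj y p.2),
      forestWeight k p.1 * k y p.2
    = ∑ K ∈ Finset.univ.filter (fun K : Finset (V × V) =>
        (∀ e ∈ K, G.Adj e.1 e.2) ∧ IsFun K ∧ K.card = Fintype.card V - 1 ∧ Rel K x y ∧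
        ¬ Root K y ∧ Acyc (K.erase (y, fn K y))), forestWeight k K := by
  refine Finset.sum_nbij' (fun p => insert (y, p.2) p.1)
    (fun K => (K.erase (y, fn K y), fn K y)) ?_ ?_ ?_ ?_ ?_
  · intro p hp
    simp only [Finset.mem_filter, Finset.mem_product, Finset.mem_univ, true_and,
      and_true] at hp ⊢
    obtain ⟨⟨⟨hFor, hcard⟩, hro⟩, hadj⟩ := hp
    have hf := forest_isFun hFor
    obtain ⟨hrel, hroot⟩ := rootOf_spec hf (forest_acyc hFor) (forest_noLoop hFor) x
    rw [hro] at hrel hroot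
    have hni : (y, p.2) ∉ p.1 := fun h => hroot _ h
    have hN2 : 2 ≤ Fintype.card V := by
      haveI : Nontrivial V := ⟨⟨y, p.2, G.ne_of_adj hadj⟩⟩
      exact Fintype.one_lt_card
    have hfK : IsFun (insert (y, p.2) p.1) := isFun_insert hf hroot
    have hfn : fn (insert (y, p.2) p.1) y = p.2 := fn_eq hfK (Finset.mem_insert_self _ _)
    refine ⟨?_, hfK, ?_, rel_mono (Finset.subset_insert _ _) hrel, ?_, ?_⟩
    · intro e he
      rcases Finset.mem_insert.1 he with he | he
      · obtain ⟨h1, h2⟩ := pair_eq he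
        rw [h1, h2]; exact hadj
      · exact hFor.1 e he
    · rw [Finset.card_insert_of_notMem hni, hcard]; omega
    · intro hroot'
      exact hroot' p.2 (Finset.mem_insert_self _ _)
    · rw [hfn, Finset.erase_insert hni]
      exact forest_acyc hFor
  · intro K hK
    simp only [Finset.mem_filter, Finset.mem_product, Finset.mem_univ, true_and,
      and_true] at hK ⊢
    obtain ⟨hsub, hf, hcard, hxy, hnr, hAe⟩ := hK
    have hyfn : (y, fn K y) ∈ K := by
      rcases fn_mem_or_root K y with h | h
      · exact h
      · exact absurd h.1 hnr
    have hsub' : K.erase (y, fn K y) ⊆ K := Finset.erase_subset _ _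
    have hfor : IsRootedForest G (K.erase (y, fn K y)) :=
      mk_forest (fun e he => hsub e (hsub' he)) (isFun_subset hsub' hf) hAe
    refine ⟨⟨⟨hfor, ?_⟩, ?_⟩, hsub _ hyfn⟩
    · rw [Finset.card_erase_of_mem hyfn, hcard]; omega
    · exact rootOf_eq (isFun_subset hsub' hf) hAe (forest_noLoop hfor)
        (rel_erase_to hxy) (root_erase_fn hf y)
  · intro p hp
    simp only [Finset.mem_filter, Finset.mem_product, Finset.mem_univ, true_and,
      and_true] at hp
    obtain ⟨⟨⟨hFor, hcard⟩, hro⟩, hadj⟩ := hp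
    have hf := forest_isFun hFor
    obtain ⟨hrel, hroot⟩ := rootOf_spec hf (forest_acyc hFor) (forest_noLoop hFor) x
    rw [hro] at hroot
    have hni : (y, p.2) ∉ p.1 := fun h => hroot _ h
    have hfK : IsFun (insert (y, p.2) p.1) := isFun_insert hf hroot
    have hfn : fn (insert (y, p.2) p.1) y = p.2 := fn_eq hfK (Finset.mem_insert_self _ _)
    rw [hfn, Finset.erase_insert hni]
  · intro K hK
    simp only [Finset.mem_filter, Finset.mem_univ, true_and] at hK
    obtain ⟨hsub, hf, hcard, hxy, hnr, hAe⟩ := hK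
    have hyfn : (y, fn K y) ∈ K := by
      rcases fn_mem_or_root K y with h | h
      · exact h
      · exact absurd h.1 hnr
    dsimp only
    exact Finset.insert_erase hyfn
  · intro p hp
    simp only [Finset.mem_filter, Finset.mem_product, Finset.mem_univ, true_and,
      and_true] at hp
    obtain ⟨⟨⟨hFor, hcard⟩, hro⟩, hadj⟩ := hp
    obtain ⟨hrel, hroot⟩ :=
      rootOf_spec (forest_isFun hFor) (forest_acyc hFor) (forest_noLoop hFor) x
    rw [hro] at hroot
    have hni : (y, p.2) ∉ p.1 := fun h => hroot _ h
    have hw : forestWeight k (insert (y, p.2) p.1) = k y p.2 * forestWeight k p.1 :=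
      Finset.prod_insert hni
    rw [hw, mul_comm]

/-- Splitting the right-hand collection into the cyclic part and the tree part. -/
lemma RPsplit {k : V → V → ℝ} (x y : V) :
    ∑ K ∈ Finset.univ.filter (fun K : Finset (V × V) =>
        (∀ e ∈ K, G.Adj e.1 e.2) ∧ IsFun K ∧ K.card = Fintype.card V - 1 ∧ Rel K x y ∧
        ¬ Root K y ∧ Acyc (K.erase (y, fn K y))), forestWeight k K
    = (∑ K ∈ Finset.univ.filter (fun K : Finset (V × V) =>
        (∀ e ∈ K, G.Adj e.1 e.2) ∧ IsFun K ∧ K.card = Fintype.card V - 1 ∧ Rel K x y ∧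
        ∃ z, (z, y) ∈ K ∧ Rel K y z ∧ Acyc (K.erase (z, y))), forestWeight k K)
      + ∑ K ∈ Finset.univ.filter (fun K : Finset (V × V) =>
        (IsRootedForest G K ∧ K.card = Fintype.card V - 1) ∧ Rel K x y ∧ ¬ Root K y),
        forestWeight k K := by
  rw [← Finset.sum_filter_add_sum_filter_not (Finset.univ.filter (fun K : Finset (V × V) =>
        (∀ e ∈ K, G.Adj e.1 e.2) ∧ IsFun K ∧ K.card = Fintype.card V - 1 ∧ Rel K x y ∧
        ¬ Root K y ∧ Acyc (K.erase (y, fn K y)))) (fun K => ¬ Acyc K) (forestWeight k)]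
  congr 1
  · refine Finset.sum_congr ?_ (fun _ _ => rfl)
    ext K
    simp only [Finset.mem_filter, Finset.mem_univ, true_and]
    constructor
    · rintro ⟨⟨hsub, hf, hcard, hxy, hnr, hAe⟩, hnA⟩
      have hN : NoLoop K := noLoop_of_adj hsub
      obtain ⟨z, hzy, hyz⟩ := exists_pred_of_not_acyc hf hN hAe hnA
      exact ⟨hsub, hf, hcard, hxy, z, hzy, hyz, acyc_pred_of_out hf hN hzy hyz hAe⟩
    · rintro ⟨hsub, hf, hcard, hxy, z, hzy, hyz, hAz⟩
      have hN : NoLoop K := noLoop_of_adj hsub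
      have hnr : ¬ Root K y := by
        intro hroot
        have := root_rel hroot hyz
        exact hN y (this ▸ hzy)
      exact ⟨⟨hsub, hf, hcard, hxy, hnr, acyc_out_of_pred hf hN hzy hyz hAz⟩,
        fun hA => hA hzy hyz⟩
  · refine Finset.sum_congr ?_ (fun _ _ => rfl)
    ext K
    simp only [Finset.mem_filter, Finset.mem_univ, true_and, not_not]
    constructor
    · rintro ⟨⟨hsub, hf, hcard, hxy, hnr, hAe⟩, hA⟩
      exact ⟨⟨mk_forest hsub hf hA, hcard⟩, hxy, hnr⟩
    · rintro ⟨⟨hFor, hcard⟩, hxy, hnr⟩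
      exact ⟨⟨hFor.1, forest_isFun hFor, hcard, hxy, hnr,
        acyc_subset (Finset.erase_subset _ _) (forest_acyc hFor)⟩, forest_acyc hFor⟩

end PF

namespace PF

open scoped Classical

variable {V : Type*} [DecidableEq V] [Fintype V] {G : SimpleGraph V}

/-- The matrix-forest identity: `(B ⬝ L) x y = τ y - T δ x y`. -/
lemma C1 {k : V → V → ℝ} (hkpos : ∀ x y, G.Adj x y → 0 < k x y)
    (hk0 : ∀ x y, ¬ G.Adj x y → k x y = 0) {L : Matrix V V ℝ}
    (hL : ∀ x y, L x y = if x = y then -(∑ z ∈ Finset.univ.erase x, k x z) else k x y)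
    (x y : V) :
    ∑ z, (weightSum k (fun F => IsRootedForest G F ∧ F.card = Fintype.card V - 2 ∧
        RootedAt F x z)) * L z y
    = weightSum k (fun F => IsRootedForest G F ∧ F.card = Fintype.card V - 1 ∧
        RootedAt F y y)
      - (if x = y then weightSum k (fun F => IsRootedForest G F ∧
          F.card = Fintype.card V - 1) else 0) := by
  haveI : Nonempty V := ⟨y⟩
  have hkyy : k y y = 0 := hk0 y y (G.loopless.irrefl y)
  have hB_eq : ∀ z, weightSum k (fun F => IsRootedForest G F ∧
      F.card = Fintype.card V - 2 ∧ RootedAt F x z)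
      = ∑ F ∈ (Finset.univ.filter (fun F : Finset (V × V) =>
          IsRootedForest G F ∧ F.card = Fintype.card V - 2)).filter
          (fun F => rootOf F x = z), forestWeight k F := by
    intro z
    rw [weightSum_eq]
    refine Finset.sum_congr ?_ (fun _ _ => rfl)
    ext F
    simp only [Finset.mem_filter, Finset.mem_univ, true_and, and_assoc]
    constructor
    · rintro ⟨hF, hcard, hrel, hroot⟩
      exact ⟨hF, hcard, rootOf_eq (forest_isFun hF) (forest_acyc hF) (forest_noLoop hF)
        hrel hroot⟩
    · rintro ⟨hF, hcard, hz⟩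
      obtain ⟨h1, h2⟩ := rootOf_spec (forest_isFun hF) (forest_acyc hF) (forest_noLoop hF) x
      rw [hz] at h1 h2
      exact ⟨hF, hcard, h1, h2⟩
  -- LHS combinatorial chain
  have hLHS : ∑ z, (weightSum k (fun F => IsRootedForest G F ∧
        F.card = Fintype.card V - 2 ∧ RootedAt F x z)) * k z y
      = (∑ K ∈ Finset.univ.filter (fun K : Finset (V × V) =>
          (∀ e ∈ K, G.Adj e.1 e.2) ∧ IsFun K ∧ K.card = Fintype.card V - 1 ∧ Rel K x y ∧
          ∃ z, (z, y) ∈ K ∧ Rel K y z ∧ Acyc (K.erase (z, y))), forestWeight k K)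
        + ∑ K ∈ Finset.univ.filter (fun K : Finset (V × V) =>
          (IsRootedForest G K ∧ K.card = Fintype.card V - 1) ∧ Rel K x y ∧ x ≠ y),
          forestWeight k K := by
    have h1 : ∑ z, (weightSum k (fun F => IsRootedForest G F ∧
          F.card = Fintype.card V - 2 ∧ RootedAt F x z)) * k z y
        = ∑ z, ∑ F ∈ (Finset.univ.filter (fun F : Finset (V × V) =>
            IsRootedForest G F ∧ F.card = Fintype.card V - 2)).filter
            (fun F => rootOf F x = z),
            forestWeight k F * k (rootOf F x) y := by
      refine Finset.sum_congr rfl (fun z _ => ?_)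
      rw [hB_eq z, Finset.sum_mul]
      refine Finset.sum_congr rfl (fun F hF => ?_)
      rw [(Finset.mem_filter.1 hF).2]
    rw [h1, Finset.sum_fiberwise _ (fun F => rootOf F x)
      (fun F => forestWeight k F * k (rootOf F x) y)]
    rw [← Finset.sum_filter_of_ne (p := fun F => G.Adj (rootOf F x) y)
      (by
        intro F _ hne
        by_contra hadj
        rw [hk0 _ _ hadj, mul_zero] at hne
        exact hne rfl)]
    rw [← Finset.sum_filter_add_sum_filter_not ((Finset.univ.filter
        (fun F : Finset (V × V) => IsRootedForest G F ∧ F.card = Fintype.card V - 2)).filter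
        (fun F => G.Adj (rootOf F x) y)) (fun F => Rel F y (rootOf F x))]
    congr 1
    · rw [← bijC1cyc x y]
      refine Finset.sum_congr ?_ (fun _ _ => rfl)
      ext F
      simp only [Finset.mem_filter, Finset.mem_univ, true_and, and_assoc]
    · rw [← bijC1tree x y]
      refine Finset.sum_congr ?_ (fun _ _ => rfl)
      ext F
      simp only [Finset.mem_filter, Finset.mem_univ, true_and, and_assoc]
  -- RHS combinatorial chain
  have hRHS : (weightSum k (fun F => IsRootedForest G F ∧
        F.card = Fintype.card V - 2 ∧ RootedAt F x y)) * (∑ w : V, k y w)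
      = (∑ K ∈ Finset.univ.filter (fun K : Finset (V × V) =>
          (∀ e ∈ K, G.Adj e.1 e.2) ∧ IsFun K ∧ K.card = Fintype.card V - 1 ∧ Rel K x y ∧
          ∃ z, (z, y) ∈ K ∧ Rel K y z ∧ Acyc (K.erase (z, y))), forestWeight k K)
        + ∑ K ∈ Finset.univ.filter (fun K : Finset (V × V) =>
          (IsRootedForest G K ∧ K.card = Fintype.card V - 1) ∧ Rel K x y ∧ ¬ Root K y),
          forestWeight k K := by
    rw [hB_eq y, ← RPsplit x y, ← bijC1R x y]
    rw [show (∑ F ∈ (Finset.univ.filter (fun F : Finset (V × V) =>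
          IsRootedForest G F ∧ F.card = Fintype.card V - 2)).filter
          (fun F => rootOf F x = y), forestWeight k F) * (∑ w : V, k y w)
        = ∑ p ∈ ((Finset.univ.filter (fun F : Finset (V × V) =>
            IsRootedForest G F ∧ F.card = Fintype.card V - 2)).filter
            (fun F => rootOf F x = y)) ×ˢ Finset.univ,
            forestWeight k p.1 * k y p.2 by
      rw [Finset.sum_product, Finset.sum_mul]
      exact Finset.sum_congr rfl (fun F _ => by rw [Finset.mul_sum])]
    rw [← Finset.sum_filter_of_ne (p := fun p => G.Adj y p.2)
      (by
        intro p _ hne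
        by_contra hadj
        rw [hk0 _ _ hadj, mul_zero] at hne
        exact hne rfl)]
  -- the tree-count difference
  have htau : (∑ K ∈ Finset.univ.filter (fun K : Finset (V × V) =>
        (IsRootedForest G K ∧ K.card = Fintype.card V - 1) ∧ Rel K x y ∧ x ≠ y),
        forestWeight k K)
      - ∑ K ∈ Finset.univ.filter (fun K : Finset (V × V) =>
        (IsRootedForest G K ∧ K.card = Fintype.card V - 1) ∧ Rel K x y ∧ ¬ Root K y),
        forestWeight k K
      = weightSum k (fun F => IsRootedForest G F ∧ F.card = Fintype.card V - 1 ∧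
          RootedAt F y y)
        - (if x = y then weightSum k (fun F => IsRootedForest G F ∧
            F.card = Fintype.card V - 1) else 0) := by
    by_cases hxy : x = y
    · subst hxy
      rw [if_pos rfl]
      have hz : (∑ K ∈ Finset.univ.filter (fun K : Finset (V × V) =>
          (IsRootedForest G K ∧ K.card = Fintype.card V - 1) ∧ Rel K x x ∧ x ≠ x),
          forestWeight k K) = 0 := by
        refine Finset.sum_eq_zero (fun K hK => ?_)
        simp only [Finset.mem_filter, ne_eq, not_true_eq_false, and_false] at hK
      have split := Finset.sum_filter_add_sum_filter_not (Finset.univ.filter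
          (fun K : Finset (V × V) => IsRootedForest G K ∧ K.card = Fintype.card V - 1))
          (fun K => Root K x) (forestWeight k)
      have eT : weightSum k (fun F => IsRootedForest G F ∧ F.card = Fintype.card V - 1)
          = ∑ K ∈ Finset.univ.filter (fun K : Finset (V × V) =>
              IsRootedForest G K ∧ K.card = Fintype.card V - 1), forestWeight k K := by
        rw [weightSum_eq]
        refine Finset.sum_congr ?_ (fun _ _ => rfl)
        ext K
        simp only [Finset.mem_filter]
      have eτ : weightSum k (fun F => IsRootedForest G F ∧ F.card = Fintype.card V - 1 ∧
            RootedAt F x x)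
          = ∑ K ∈ (Finset.univ.filter (fun K : Finset (V × V) =>
              IsRootedForest G K ∧ K.card = Fintype.card V - 1)).filter
              (fun K => Root K x), forestWeight k K := by
        rw [weightSum_eq]
        refine Finset.sum_congr ?_ (fun _ _ => rfl)
        ext K
        simp only [Finset.mem_filter, Finset.mem_univ, true_and, and_assoc]
        exact ⟨fun ⟨h1, h2, _, h3⟩ => ⟨h1, h2, h3⟩,
          fun ⟨h1, h2, h3⟩ => ⟨h1, h2, Relation.ReflTransGen.refl, h3⟩⟩
      have eB : (∑ K ∈ Finset.univ.filter (fun K : Finset (V × V) =>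
            (IsRootedForest G K ∧ K.card = Fintype.card V - 1) ∧ Rel K x x ∧ ¬ Root K x),
            forestWeight k K)
          = ∑ K ∈ (Finset.univ.filter (fun K : Finset (V × V) =>
              IsRootedForest G K ∧ K.card = Fintype.card V - 1)).filter
              (fun K => ¬ Root K x), forestWeight k K := by
        refine Finset.sum_congr ?_ (fun _ _ => rfl)
        ext K
        simp only [Finset.mem_filter, Finset.mem_univ, true_and, and_assoc]
        exact ⟨fun ⟨h1, h2, _, h3⟩ => ⟨h1, h2, h3⟩,
          fun ⟨h1, h2, h3⟩ => ⟨h1, h2, Relation.ReflTransGen.refl, h3⟩⟩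
      rw [hz, eT, eτ, eB]
      linarith [split]
    · rw [if_neg hxy, sub_zero]
      rw [← Finset.sum_filter_add_sum_filter_not (Finset.univ.filter
          (fun K : Finset (V × V) =>
          (IsRootedForest G K ∧ K.card = Fintype.card V - 1) ∧ Rel K x y ∧ x ≠ y))
          (fun K => Root K y) (forestWeight k)]
      have e1 : ∑ K ∈ (Finset.univ.filter (fun K : Finset (V × V) =>
          (IsRootedForest G K ∧ K.card = Fintype.card V - 1) ∧ Rel K x y ∧ x ≠ y)).filter
          (fun K => Root K y), forestWeight k K
          = weightSum k (fun F => IsRootedForest G F ∧ F.card = Fintype.card V - 1 ∧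
              RootedAt F y y) := by
        rw [weightSum_eq]
        refine Finset.sum_congr ?_ (fun _ _ => rfl)
        ext K
        simp only [Finset.mem_filter, Finset.mem_univ, true_and, and_assoc]
        constructor
        · rintro ⟨h1, h2, _, _, h3⟩
          exact ⟨h1, h2, Relation.ReflTransGen.refl, h3⟩
        · rintro ⟨h1, h2, _, h3⟩
          exact ⟨h1, h2, tree_all_rel (forest_isFun h1) (forest_acyc h1) (forest_noLoop h1)
            h2 h3 x, hxy, h3⟩
      have e2 : ∑ K ∈ (Finset.univ.filter (fun K : Finset (V × V) =>
          (IsRootedForest G K ∧ K.card = Fintype.card V - 1) ∧ Rel K x y ∧ x ≠ y)).filter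
          (fun K => ¬ Root K y), forestWeight k K
          = ∑ K ∈ Finset.univ.filter (fun K : Finset (V × V) =>
            (IsRootedForest G K ∧ K.card = Fintype.card V - 1) ∧ Rel K x y ∧ ¬ Root K y),
            forestWeight k K := by
        refine Finset.sum_congr ?_ (fun _ _ => rfl)
        ext K
        simp only [Finset.mem_filter, Finset.mem_univ, true_and, and_assoc]
        exact ⟨fun ⟨h1, h2, h3, _, h4⟩ => ⟨h1, h2, h3, h4⟩,
          fun ⟨h1, h2, h3, h4⟩ => ⟨h1, h2, h3, hxy, h4⟩⟩
      rw [e1, e2]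
      ring
  -- assembling
  have hpt : ∀ z, (weightSum k (fun F => IsRootedForest G F ∧
        F.card = Fintype.card V - 2 ∧ RootedAt F x z)) * L z y
      = (weightSum k (fun F => IsRootedForest G F ∧ F.card = Fintype.card V - 2 ∧
          RootedAt F x z)) * k z y
        - (if z = y then (weightSum k (fun F => IsRootedForest G F ∧
            F.card = Fintype.card V - 2 ∧ RootedAt F x y)) * (∑ w : V, k y w) else 0) := by
    intro z
    by_cases hzy : z = y
    · subst hzy
      rw [hL, if_pos rfl, if_pos rfl]
      have he : ∑ w ∈ Finset.univ.erase z, k z w = (∑ w : V, k z w) - k z z := by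
        rw [← Finset.sum_erase_eq_sub (Finset.mem_univ z)]
      rw [he, hkyy]
      ring
    · rw [hL, if_neg hzy, if_neg hzy, sub_zero]
  rw [Finset.sum_congr rfl (fun z _ => hpt z), Finset.sum_sub_distrib,
    Finset.sum_ite_eq' Finset.univ y, if_pos (Finset.mem_univ y), hLHS, hRHS, ← htau]
  ring

end PF

namespace PF

open scoped Classical

variable {V : Type*} [DecidableEq V] [Fintype V] {G : SimpleGraph V}

lemma exists_spanning_tree (hG : G.Connected) :
    ∃ F : Finset (V × V), IsRootedForest G F ∧ F.card = Fintype.card V - 1 := by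
  obtain ⟨r⟩ := hG.nonempty
  have walk_cross : ∀ (S : Finset V) (v : V), v ∉ S → ∀ (d : V), d ∈ S → G.Walk v d →
      ∃ p q, p ∉ S ∧ q ∈ S ∧ G.Adj p q := by
    intro S v hv d hd w
    induction w with
    | nil => exact absurd hd hv
    | @cons a b c h p ih =>
        by_cases hb : b ∈ S
        · exact ⟨a, b, hv, hb, h⟩
        · exact ih hb hd
  have key : ∀ (n : ℕ) (S : Finset V) (F : Finset (V × V)),
      (Finset.univ \ S).card = n → r ∈ S →
      (∀ e ∈ F, G.Adj e.1 e.2 ∧ e.1 ∈ S ∧ e.2 ∈ S) → IsFun F → Acyc F →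
      F.card + 1 = S.card → (∀ a ∈ S, Rel F a r) → (∀ a, a ∉ S → Root F a) →
      ∃ F' : Finset (V × V), IsRootedForest G F' ∧ F'.card = Fintype.card V - 1 := by
    intro n
    induction n with
    | zero =>
        intro S F hn hr hsub hf hA hcard hrel _
        have hS : S = Finset.univ := by
          have h0 : Finset.univ \ S = ∅ := Finset.card_eq_zero.1 hn
          have h2 : Finset.univ ⊆ S := fun a ha => by
            by_contra hc
            have hmem : a ∈ Finset.univ \ S := Finset.mem_sdiff.2 ⟨ha, hc⟩
            rw [h0] at hmem
            exact Finset.notMem_empty a hmem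
          exact Finset.Subset.antisymm (Finset.subset_univ S) h2
        refine ⟨F, mk_forest (fun e he => (hsub e he).1) hf hA, ?_⟩
        rw [hS, Finset.card_univ] at hcard
        omega
    | succ n ih =>
        intro S F hn hr hsub hf hA hcard hrel hroot
        have hv : ∃ v, v ∈ Finset.univ \ S := by
          apply Finset.card_pos.1
          rw [hn]
          omega
        obtain ⟨v, hv⟩ := hv
        have hvS : v ∉ S := (Finset.mem_sdiff.1 hv).2
        obtain ⟨w⟩ := hG.preconnected v r
        obtain ⟨p, q, hp, hq, hpq⟩ := walk_cross S v hvS r hr w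
        have hrootp : Root F p := hroot p hp
        have hnqp : ¬ Rel F q p := by
          intro h
          rcases Relation.ReflTransGen.cases_tail h with h' | ⟨c, _, hc2⟩
          · exact hp (h' ▸ hq)
          · exact hp (hsub _ hc2).2.2
        have hniF : (p, q) ∉ F := fun h => hp (hsub _ h).2.1
        refine ih (insert p S) (insert (p, q) F) ?_ (Finset.mem_insert_of_mem hr) ?_
          (isFun_insert hf hrootp) (acyc_insert hA hrootp hnqp) ?_ ?_ ?_
        · have h1 : Finset.univ \ insert p S = (Finset.univ \ S).erase p := by
            ext a
            simp only [Finset.mem_sdiff, Finset.mem_erase, Finset.mem_insert, Finset.mem_univ,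
              true_and, not_or]
          rw [h1, Finset.card_erase_of_mem (Finset.mem_sdiff.2 ⟨Finset.mem_univ _, hp⟩), hn]
          omega
        · intro e he
          rcases Finset.mem_insert.1 he with he | he
          · obtain ⟨h1, h2⟩ := pair_eq he
            exact ⟨h1 ▸ h2 ▸ hpq, h1 ▸ Finset.mem_insert_self _ _,
              h2 ▸ Finset.mem_insert_of_mem hq⟩
          · exact ⟨(hsub e he).1, Finset.mem_insert_of_mem (hsub e he).2.1,
              Finset.mem_insert_of_mem (hsub e he).2.2⟩
        · rw [Finset.card_insert_of_notMem hniF, Finset.card_insert_of_notMem hp]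
          omega
        · intro a ha
          rcases Finset.mem_insert.1 ha with ha | ha
          · subst ha
            exact (Relation.ReflTransGen.single
              (Finset.mem_insert_self (a, q) F : forestStep _ a q)).trans
              (rel_mono (Finset.subset_insert _ _) (hrel q hq))
          · exact rel_mono (Finset.subset_insert _ _) (hrel a ha)
        · intro a ha
          exact root_insert_of_ne (hroot a (fun h => ha (Finset.mem_insert_of_mem h)))
            (fun h => ha (h ▸ Finset.mem_insert_self _ _))
  refine key (Finset.univ \ {r}).card {r} ∅ ?_ (Finset.mem_singleton_self r) ?_ ?_ ?_ ?_ ?_ ?_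
  · rfl
  · simp
  · intro a b c h _
    simp at h
  · intro a b h
    exact absurd h (Finset.notMem_empty _)
  · simp
  · intro a ha
    rw [Finset.mem_singleton.1 ha]
  · intro a _ w hw
    simp at hw

end PF

namespace PF

open scoped Classical

variable {V : Type*} [DecidableEq V] [Fintype V] {G : SimpleGraph V}

lemma T_pos {k : V → V → ℝ} (hG : G.Connected) (hkpos : ∀ x y, G.Adj x y → 0 < k x y) :
    0 < weightSum k (fun F => IsRootedForest G F ∧ F.card = Fintype.card V - 1) := by
  rw [weightSum_eq]
  obtain ⟨F₀, hF₀, hc₀⟩ := exists_spanning_tree hG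
  have hpos : ∀ F : Finset (V × V), IsRootedForest G F → 0 < forestWeight k F := by
    intro F hF
    exact Finset.prod_pos (fun e he => hkpos _ _ (hF.1 e he))
  refine Finset.sum_pos' (fun F hF => ?_) ⟨F₀, ?_, hpos F₀ hF₀⟩
  · simp only [Finset.mem_filter] at hF
    exact (hpos F hF.2.1).le
  · simp only [Finset.mem_filter]
    exact ⟨Finset.mem_univ _, hF₀, hc₀⟩

lemma ker_const {k : V → V → ℝ} (hG : G.Connected) (hkpos : ∀ x y, G.Adj x y → 0 < k x y)
    (hk0 : ∀ x y, ¬ G.Adj x y → k x y = 0) {L : Matrix V V ℝ}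
    (hL : ∀ x y, L x y = if x = y then -(∑ z ∈ Finset.univ.erase x, k x z) else k x y)
    {v : V → ℝ} (hv : L.mulVec v = 0) (a b : V) : v a = v b := by
  obtain ⟨m, -, hm⟩ := Finset.exists_max_image Finset.univ v ⟨a, Finset.mem_univ a⟩
  have step : ∀ c, v c = v m → ∀ d, G.Adj c d → v d = v m := by
    intro c hc d hcd
    have h1 : ∑ y, L c y * v y = 0 := by
      have := congrFun hv c
      simpa [Matrix.mulVec, dotProduct] using this
    have e1 : ∑ y ∈ Finset.univ.erase c, L c y * v y
        = ∑ y ∈ Finset.univ.erase c, k c y * v y := by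
      refine Finset.sum_congr rfl (fun y hy => ?_)
      rw [hL, if_neg (fun h => (Finset.mem_erase.1 hy).1 h.symm)]
    have h2 : (∑ y ∈ Finset.univ.erase c, L c y * v y) + L c c * v c = ∑ y, L c y * v y :=
      Finset.sum_erase_add Finset.univ (fun y => L c y * v y) (Finset.mem_univ c)
    rw [h1, e1, hL c c, if_pos rfl, neg_mul] at h2
    have h5 : ∑ y ∈ Finset.univ.erase c, k c y * (v y - v c) = 0 := by
      have e2 : ∑ y ∈ Finset.univ.erase c, k c y * (v y - v c)
          = (∑ y ∈ Finset.univ.erase c, k c y * v y)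
            - (∑ y ∈ Finset.univ.erase c, k c y) * v c := by
        simp only [mul_sub]
        rw [Finset.sum_sub_distrib, Finset.sum_mul]
      rw [e2]
      linarith [h2]
    have hnonpos : ∀ y ∈ Finset.univ.erase c, k c y * (v y - v c) ≤ 0 := by
      intro y hy
      have hvy : v y ≤ v c := hc ▸ hm y (Finset.mem_univ y)
      by_cases hadj : G.Adj c y
      · exact mul_nonpos_of_nonneg_of_nonpos (hkpos _ _ hadj).le (by linarith)
      · rw [hk0 _ _ hadj, zero_mul]
    have hd : k c d * (v d - v c) = 0 := by
      have := (Finset.sum_eq_zero_iff_of_nonpos hnonpos).1 h5 d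
        (Finset.mem_erase.2 ⟨(G.ne_of_adj hcd).symm, Finset.mem_univ d⟩)
      exact this
    rcases mul_eq_zero.1 hd with h | h
    · exact absurd h (hkpos _ _ hcd).ne'
    · have : v d = v c := by linarith
      rw [this, hc]
  have hwalk : ∀ (u u' : V), G.Walk u u' → v u = v m → v u' = v m := by
    intro u u' hw
    induction hw with
    | nil => exact id
    | cons h p ih => intro hu; exact ih (step _ hu _ h)
  have hall : ∀ c, v c = v m := by
    intro c
    obtain ⟨w⟩ := hG.preconnected m c
    exact hwalk m c w rfl
  rw [hall a, hall b]

lemma left_ker {k : V → V → ℝ} (hG : G.Connected) (hkpos : ∀ x y, G.Adj x y → 0 < k x y)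
    (hk0 : ∀ x y, ¬ G.Adj x y → k x y = 0) {L : Matrix V V ℝ}
    (hL : ∀ x y, L x y = if x = y then -(∑ z ∈ Finset.univ.erase x, k x z) else k x y)
    {ρ : V → ℝ} (hρsum : ∑ x, ρ x = 1) (hρstat : Matrix.vecMul ρ L = 0)
    {w : V → ℝ} (hw : Matrix.vecMul w L = 0) : w = (∑ x, w x) • ρ := by
  haveI : Nonempty V := hG.nonempty
  set x₀ := Classical.arbitrary V with hx₀
  have hL1 : L.mulVec (fun _ => (1 : ℝ)) = 0 := by
    funext c
    simp only [Matrix.mulVec, dotProduct, mul_one, Pi.zero_apply]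
    have h2 : (∑ y ∈ Finset.univ.erase c, L c y) + L c c = ∑ y, L c y :=
      Finset.sum_erase_add Finset.univ (fun y => L c y) (Finset.mem_univ c)
    have e1 : ∑ y ∈ Finset.univ.erase c, L c y = ∑ y ∈ Finset.univ.erase c, k c y := by
      refine Finset.sum_congr rfl (fun y hy => ?_)
      rw [hL, if_neg (fun h => (Finset.mem_erase.1 hy).1 h.symm)]
    rw [e1, hL c c, if_pos rfl] at h2
    rw [← h2]
    ring
  have hker : LinearMap.ker L.mulVecLin = Submodule.span ℝ {(fun _ => (1 : ℝ) : V → ℝ)} := by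
    apply le_antisymm
    · intro u hu
      rw [LinearMap.mem_ker, Matrix.mulVecLin_apply] at hu
      rw [Submodule.mem_span_singleton]
      refine ⟨u x₀, funext fun c => ?_⟩
      simp only [Pi.smul_apply, smul_eq_mul, mul_one]
      exact ker_const hG hkpos hk0 hL hu x₀ c
    · rw [Submodule.span_le, Set.singleton_subset_iff]
      rw [SetLike.mem_coe, LinearMap.mem_ker, Matrix.mulVecLin_apply]
      exact hL1
  have hone_ne : (fun _ => (1 : ℝ) : V → ℝ) ≠ 0 := by
    intro h
    have := congrFun h x₀
    simp at this
  have hdim : Module.finrank ℝ (LinearMap.ker L.mulVecLin) = 1 := by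
    rw [hker]
    exact finrank_span_singleton hone_ne
  have hrank : L.rank + 1 = Fintype.card V := by
    have h := LinearMap.finrank_range_add_finrank_ker L.mulVecLin
    rw [hdim, Module.finrank_fintype_fun_eq_card] at h
    exact h
  have hdimT : Module.finrank ℝ (LinearMap.ker (Lᵀ).mulVecLin) = 1 := by
    have h := LinearMap.finrank_range_add_finrank_ker (Lᵀ).mulVecLin
    rw [Module.finrank_fintype_fun_eq_card] at h
    have hT : (Lᵀ).rank = L.rank := Matrix.rank_transpose L
    have : (Lᵀ).rank = Module.finrank ℝ (LinearMap.range (Lᵀ).mulVecLin) := rfl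
    omega
  have hρmem : ρ ∈ LinearMap.ker (Lᵀ).mulVecLin := by
    rw [LinearMap.mem_ker, Matrix.mulVecLin_apply, Matrix.mulVec_transpose, hρstat]
  have hwmem : w ∈ LinearMap.ker (Lᵀ).mulVecLin := by
    rw [LinearMap.mem_ker, Matrix.mulVecLin_apply, Matrix.mulVec_transpose, hw]
  have hρne : ρ ≠ 0 := by
    intro h
    rw [h] at hρsum
    simp at hρsum
  have hspan : Submodule.span ℝ {ρ} = LinearMap.ker (Lᵀ).mulVecLin := by
    apply Submodule.eq_of_le_of_finrank_le
    · rw [Submodule.span_le, Set.singleton_subset_iff]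
      exact hρmem
    · rw [hdimT, finrank_span_singleton hρne]
  have hwspan : w ∈ Submodule.span ℝ ({ρ} : Set (V → ℝ)) := by
    rw [hspan]
    exact hwmem
  obtain ⟨c, hc⟩ := Submodule.mem_span_singleton.1 hwspan
  have hsum : ∑ x, w x = c := by
    rw [← hc]
    simp only [Pi.smul_apply, smul_eq_mul]
    rw [← Finset.mul_sum, hρsum, mul_one]
  rw [hsum, ← hc]

end PF

/-- Graphical formula for the pseudo-potential: for an irreducible Markov jump
process on a finite connected graph with `N` vertices, stationary distribution
`ρ`, and a source `f` with `⟨f⟩ = 0`, the pseudo-potential `V = L_D⁻¹ f`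
(where `L_D⁻¹` is the Drazin inverse of the backward generator `L`) satisfies
`V(x) = -∑_y (w(F_{N-2}^{x→y}) / w(F_{N-1})) f(y)`. -/
theorem pseudo_potential_forest_formula
    {V : Type*} [Fintype V] [DecidableEq V]
    (G : SimpleGraph V) (hG : G.Connected)
    (k : V → V → ℝ) (hkpos : ∀ x y, G.Adj x y → 0 < k x y)
    (hk0 : ∀ x y, ¬ G.Adj x y → k x y = 0)
    (L : Matrix V V ℝ)
    (hL : ∀ x y, L x y = if x = y then -(∑ z ∈ Finset.univ.erase x, k x z) else k x y)
    (ρ : V → ℝ) (hρpos : ∀ x, 0 ≤ ρ x) (hρsum : ∑ x, ρ x = 1)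
    (hρstat : Matrix.vecMul ρ L = 0)
    (X : Matrix V V ℝ)
    (hX1 : X * L * X = X) (hX2 : L * X = X * L) (hX3 : L ^ 2 * X = L)
    (f : V → ℝ) (hf : ∑ y, ρ y * f y = 0) (x : V) :
    X.mulVec f x =
      -∑ y, (weightSum k
            (fun F => IsRootedForest G F ∧ F.card = Fintype.card V - 2 ∧ RootedAt F x y) /
          weightSum k
            (fun F => IsRootedForest G F ∧ F.card = Fintype.card V - 1)) * f y := by
  classical
  haveI : Nonempty V := hG.nonempty
  have hT : 0 < weightSum k (fun F => IsRootedForest G F ∧ F.card = Fintype.card V - 1) :=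
    PF.T_pos hG hkpos
  set T := weightSum k (fun F => IsRootedForest G F ∧ F.card = Fintype.card V - 1)
    with hTdef
  set τ := fun y => weightSum k (fun F => IsRootedForest G F ∧
    F.card = Fintype.card V - 1 ∧ RootedAt F y y) with hτdef
  -- the tree vector is stationary
  have hτstat : Matrix.vecMul τ L = 0 := by
    funext y
    have h := PF.treeThm (G := G) hkpos hk0 hL y
    simp only [Matrix.vecMul, dotProduct, hτdef, Pi.zero_apply]
    exact h
  have hτρ : τ = (∑ y, τ y) • ρ :=
    PF.left_ker hG hkpos hk0 hL hρsum hρstat hτstat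
  -- total tree weight equals the sum of rooted tree weights
  have hsumτ : ∑ y, τ y = T := by
    have hfib : ∀ y, τ y = ∑ K ∈ (Finset.univ.filter (fun K : Finset (V × V) =>
        IsRootedForest G K ∧ K.card = Fintype.card V - 1)).filter
        (fun K => PF.rootOf K x = y), forestWeight k K := by
      intro y
      simp only [hτdef]
      rw [PF.weightSum_eq]
      refine Finset.sum_congr ?_ (fun _ _ => rfl)
      ext K
      simp only [Finset.mem_filter, Finset.mem_univ, true_and, and_assoc]
      constructor
      · rintro ⟨h1, h2, _, h3⟩
        exact ⟨h1, h2, PF.rootOf_eq (PF.forest_isFun h1) (PF.forest_acyc h1)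
          (PF.forest_noLoop h1) (PF.tree_all_rel (PF.forest_isFun h1) (PF.forest_acyc h1)
            (PF.forest_noLoop h1) h2 h3 x) h3⟩
      · rintro ⟨h1, h2, h3⟩
        obtain ⟨hr1, hr2⟩ := PF.rootOf_spec (PF.forest_isFun h1) (PF.forest_acyc h1)
          (PF.forest_noLoop h1) x
        rw [h3] at hr2
        exact ⟨h1, h2, Relation.ReflTransGen.refl, hr2⟩
    rw [Finset.sum_congr rfl (fun y _ => hfib y), Finset.sum_fiberwise, hTdef,
      PF.weightSum_eq]
    refine Finset.sum_congr ?_ (fun _ _ => rfl)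
    ext K
    simp only [Finset.mem_filter]
  have hτT : ∀ y, τ y = T * ρ y := by
    intro y
    rw [hτρ, hsumτ]
    simp
  -- the matrix-forest identity in final form
  have hC1 : ∀ a b : V, ∑ z, (weightSum k (fun F => IsRootedForest G F ∧
        F.card = Fintype.card V - 2 ∧ RootedAt F a z)) * L z b
      = T * ρ b - (if a = b then T else 0) := by
    intro a b
    rw [PF.C1 hkpos hk0 hL a b]
    have h1 : weightSum k (fun F => IsRootedForest G F ∧ F.card = Fintype.card V - 1 ∧
        RootedAt F b b) = T * ρ b := hτT b
    rw [h1, ← hTdef]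
  -- the candidate matrix
  set m : V → V → ℝ := fun a b => -(weightSum k (fun F => IsRootedForest G F ∧
    F.card = Fintype.card V - 2 ∧ RootedAt F a b) / T) with hmdef
  have hmL : ∀ b : V, ∑ z, m x z * L z b = (if x = b then 1 else 0) - ρ b := by
    intro b
    have h1 : ∑ z, m x z * L z b
        = -((∑ z, (weightSum k (fun F => IsRootedForest G F ∧
            F.card = Fintype.card V - 2 ∧ RootedAt F x z)) * L z b) / T) := by
      rw [Finset.sum_div, ← Finset.sum_neg_distrib]
      refine Finset.sum_congr rfl (fun z _ => ?_)
      simp only [hmdef]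
      ring
    rw [h1, hC1 x b]
    by_cases hxb : x = b
    · rw [if_pos hxb, if_pos hxb]
      field_simp
      ring
    · rw [if_neg hxb, if_neg hxb]
      field_simp
      ring
  -- identification of L * X
  have hLP : L * (1 - L * X) = 0 := by
    rw [Matrix.mul_sub, Matrix.mul_one, ← Matrix.mul_assoc, ← pow_two, hX3, sub_self]
  have hPcol : ∀ a a' b : V, (1 - L * X) a b = (1 - L * X) a' b := by
    intro a a' b
    refine PF.ker_const hG hkpos hk0 hL (v := fun c => (1 - L * X) c b) ?_ a a'
    funext c
    have h := congrFun (congrFun hLP c) b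
    simp only [Matrix.mul_apply, Matrix.zero_apply] at h
    simpa [Matrix.mulVec, dotProduct] using h
  have hρP : ∀ b : V, ∑ a, ρ a * (1 - L * X) a b = ρ b := by
    intro b
    have h1 : Matrix.vecMul ρ (1 - L * X) = ρ := by
      rw [Matrix.vecMul_sub, Matrix.vecMul_one, ← Matrix.vecMul_vecMul, hρstat]
      simp
    have h := congrFun h1 b
    simpa [Matrix.vecMul, dotProduct] using h
  have hP : ∀ a b : V, (1 - L * X) a b = ρ b := by
    intro a b
    have h2 : ∑ a', ρ a' * (1 - L * X) a' b = (1 - L * X) a b := by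
      rw [Finset.sum_congr rfl (fun a' _ => by rw [hPcol a' a b]), ← Finset.sum_mul, hρsum,
        one_mul]
    rw [← h2, hρP b]
  have hXL : ∀ a b : V, ∑ z, X a z * L z b = (if a = b then 1 else 0) - ρ b := by
    intro a b
    have h1 : (X * L) a b = (L * X) a b := by rw [← hX2]
    have h2 : (L * X) a b = (if a = b then 1 else 0) - ρ b := by
      have := hP a b
      simp only [Matrix.sub_apply, Matrix.one_apply] at this
      linarith
    rw [← Matrix.mul_apply, h1, h2]
  -- the row of m - X is proportional to ρ
  have hrow : (fun b => m x b - X x b)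
      = (∑ z, (m x z - X x z)) • ρ := by
    refine PF.left_ker hG hkpos hk0 hL hρsum hρstat ?_
    funext b
    have h : Matrix.vecMul (fun b => m x b - X x b) L b
        = (∑ z, m x z * L z b) - ∑ z, X x z * L z b := by
      simp only [Matrix.vecMul, dotProduct, sub_mul]
      rw [Finset.sum_sub_distrib]
    rw [h, hmL b, hXL x b]
    simp
  -- conclusion
  have hfin : ∑ y, (m x y - X x y) * f y = 0 := by
    have h1 : ∀ y, (m x y - X x y) * f y = (∑ z, (m x z - X x z)) * (ρ y * f y) := by
      intro y
      have := congrFun hrow y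
      simp only [Pi.smul_apply, smul_eq_mul] at this
      rw [this]
      ring
    rw [Finset.sum_congr rfl (fun y _ => h1 y), ← Finset.mul_sum, hf, mul_zero]
  have hXf : X.mulVec f x = ∑ y, X x y * f y := by
    simp [Matrix.mulVec, dotProduct]
  have hgoal : ∑ y, X x y * f y = ∑ y, m x y * f y := by
    have := Finset.sum_sub_distrib (s := Finset.univ)
      (f := fun y => m x y * f y) (g := fun y => X x y * f y)
    have h2 : ∑ y, (m x y - X x y) * f y
        = ∑ y, m x y * f y - ∑ y, X x y * f y := by
      rw [← this]
      exact Finset.sum_congr rfl (fun y _ => by ring)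
    rw [h2] at hfin
    linarith
  rw [hXf, hgoal, ← Finset.sum_neg_distrib]
  refine Finset.sum_congr rfl (fun y _ => ?_)
  simp only [hmdef]
  ring
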